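/- arXiv:1709.08734 — 8 statements merged into one kernel-verified Lean document; each statement's English description precedes it below -/
import Mathlib

section
/- A nonempty topological space X inverts weak homotopy equivalences (i.e., for every weak homotopy equivalence f : A → B, the induced map f* : [B,X] → [A,X] on homotopy classes of maps is a bijection) if and only if X is contractible. -/
open ContinuousMap Topology

noncomputable section

/-- The setoid of homotopy on continuous maps `C(A, X)`. -/
def homotopySetoid (A X : Type*) [TopologicalSpace A] [TopologicalSpace X] :
    Setoid C(A, X) :=
  ⟨ContinuousMap.Homotopic, ContinuousMap.Homotopic.equivalence⟩

/-- `[A, X]`: homotopy classes of continuous maps `A → X`. -/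
def HtpyClasses (A X : Type*) [TopologicalSpace A] [TopologicalSpace X] : Type _ :=
  Quotient (homotopySetoid A X)

/-- Precomposition `f^* : [B, X] → [A, X]`, `[g] ↦ [g ∘ f]`. -/
def precomp {A B X : Type*} [TopologicalSpace A] [TopologicalSpace B] [TopologicalSpace X]
    (f : C(A, B)) : HtpyClasses B X → HtpyClasses A X :=
  Quotient.map (fun g => g.comp f)
    (fun _ _ h => ContinuousMap.Homotopic.comp h (ContinuousMap.Homotopic.refl f))

/-- The induced map on path components. -/
def zerothMap {A B : Type*} [TopologicalSpace A] [TopologicalSpace B] (f : C(A, B)) :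
    ZerothHomotopy A → ZerothHomotopy B :=
  Quotient.map f (fun _ _ h => Nonempty.map (fun p => p.map f.continuous) h)

/-- The induced map on `n`-th homotopy groups. -/
def piMap {A B : Type*} [TopologicalSpace A] [TopologicalSpace B] (f : C(A, B)) (n : ℕ)
    (a : A) : HomotopyGroup (Fin n) A a → HomotopyGroup (Fin n) B (f a) :=
  Quotient.map
    (fun p => ⟨f.comp p.1, fun y hy => by rw [ContinuousMap.comp_apply, p.2 y hy]⟩)
    (fun _ _ h => Nonempty.map (fun H => H.compContinuousMap f) h)

/-- A continuous map is a weak homotopy equivalence if it induces a bijection on path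
components and isomorphisms on all homotopy groups at all basepoints. -/
def IsWeakHomotopyEquiv {A B : Type*} [TopologicalSpace A] [TopologicalSpace B]
    (f : C(A, B)) : Prop :=
  Function.Bijective (zerothMap f) ∧ ∀ (n : ℕ) (a : A), Function.Bijective (piMap f n a)

/-- `X` inverts weak homotopy equivalences: every weak homotopy equivalence `f : A → B`
induces a bijection `f^* : [B, X] → [A, X]`. -/
def InvertsWeakEquivs (X : Type) [TopologicalSpace X] : Prop :=
  ∀ (A B : Type) [TopologicalSpace A] [TopologicalSpace B] (f : C(A, B)),
    IsWeakHomotopyEquiv f → Function.Bijective (precomp (X := X) f)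

/-- Index type for the "long convergent sequence" gadget. -/
def GIdx (X Q : Type) : Type := Set (Set (X ⊕ Q ⊕ ℕ))

/-- The cardinal bound. -/
def GCard (X Q : Type) : Cardinal := Cardinal.mk (Set (X ⊕ Q ⊕ ℕ))

lemma GCard_infinite (X Q : Type) : Cardinal.aleph0 ≤ GCard X Q := by
  have h1 : Cardinal.aleph0 = Cardinal.mk ℕ := (Cardinal.mk_nat).symm
  rw [GCard, h1]
  have : Cardinal.mk ℕ ≤ Cardinal.mk (X ⊕ Q ⊕ ℕ) :=
    Cardinal.mk_le_of_injective (f := fun n => Sum.inr (Sum.inr n))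
      (fun a b h => by simpa using h)
  refine this.trans (le_of_lt ?_)
  rw [Cardinal.mk_set]
  exact Cardinal.cantor _

lemma GIdx_card (X Q : Type) : Cardinal.mk (GIdx X Q) = 2 ^ GCard X Q := by
  rw [GIdx, GCard, Cardinal.mk_set]

lemma GCard_lt_GIdx (X Q : Type) : GCard X Q < Cardinal.mk (GIdx X Q) := by
  rw [GIdx_card]; exact Cardinal.cantor _

/-- The gadget space: `GIdx X Q` many isolated points plus a point `∞` whose
neighbourhoods are co-small sets. -/
def GadB (X Q : Type) : Type := GIdx X Q ⊕ Unit

/-- The same carrier with the discrete topology. -/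
def GadA (X Q : Type) : Type := GIdx X Q ⊕ Unit

instance (X Q : Type) : TopologicalSpace (GadA X Q) := ⊥
instance (X Q : Type) : DiscreteTopology (GadA X Q) := ⟨rfl⟩

/-- smallness of a set of indices -/
def GSmall (X Q : Type) (s : Set (GIdx X Q)) : Prop := Cardinal.mk s ≤ GCard X Q

lemma GSmall_union {X Q : Type} {s t : Set (GIdx X Q)} (hs : GSmall X Q s) (ht : GSmall X Q t) :
    GSmall X Q (s ∪ t) := by
  have h1 := (Cardinal.mk_union_le s t)
  refine le_trans h1 ?_
  have h2 : Cardinal.mk s + Cardinal.mk t ≤ GCard X Q + GCard X Q := add_le_add hs ht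
  refine le_trans h2 ?_
  rw [Cardinal.add_eq_self (GCard_infinite X Q)]

lemma GSmall_mono {X Q : Type} {s t : Set (GIdx X Q)} (h : s ⊆ t) (ht : GSmall X Q t) :
    GSmall X Q s := le_trans (Cardinal.mk_le_mk_of_subset h) ht

lemma GSmall_empty (X Q : Type) : GSmall X Q ∅ := by
  simp [GSmall]

instance (X Q : Type) : TopologicalSpace (GadB X Q) where
  IsOpen W := Sum.inr () ∈ W → GSmall X Q {i | Sum.inl i ∉ W}
  isOpen_univ := by
    intro _
    exact GSmall_mono (fun i hi => (hi (Set.mem_univ _)).elim) (GSmall_empty X Q)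
  isOpen_inter := by
    intro U V hU hV h
    have h1 := hU (by exact h.1)
    have h2 := hV (by exact h.2)
    have : {i | Sum.inl i ∉ U ∩ V} ⊆ {i | Sum.inl i ∉ U} ∪ {i | Sum.inl i ∉ V} := by
      intro i hi
      by_cases hiU : Sum.inl i ∈ U
      · right; intro hiV; exact hi ⟨hiU, hiV⟩
      · left; exact hiU
    exact GSmall_mono this (GSmall_union h1 h2)
  isOpen_sUnion := by
    intro 𝔖 h𝔖 hmem
    obtain ⟨W, hW, hWm⟩ := hmem
    have := h𝔖 W hW hWm
    refine GSmall_mono ?_ this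
    intro i hi
    intro hiW
    exact hi ⟨W, hW, hiW⟩

/-! ### Constancy of maps into the gadget -/

lemma gsmall_countable {X Q : Type} {s : Set (GIdx X Q)} (hs : s.Countable) : GSmall X Q s := by
  have h1 : Cardinal.mk s ≤ Cardinal.aleph0 := hs.le_aleph0
  exact h1.trans (GCard_infinite X Q)

lemma isOpen_inl_singleton {X Q : Type} (i : GIdx X Q) :
    IsOpen ({Sum.inl i} : Set (GadB X Q)) := by
  intro h
  exact (Sum.inr_ne_inl (Set.mem_singleton_iff.mp h)).elim

lemma isOpen_compl_inl_singleton {X Q : Type} (i : GIdx X Q) :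
    IsOpen ({Sum.inl i}ᶜ : Set (GadB X Q)) := by
  intro _
  have : {j : GIdx X Q | Sum.inl j ∉ ({Sum.inl i}ᶜ : Set (GadB X Q))} ⊆ {i} := by
    intro j hj
    simp only [Set.mem_setOf_eq, Set.mem_compl_iff, not_not, Set.mem_singleton_iff] at hj
    exact Set.mem_singleton_iff.mpr (Sum.inl.inj (Classical.byContradiction fun hne => hj hne : (Sum.inl j : GIdx X Q ⊕ Unit) = Sum.inl i))
  exact GSmall_mono this (gsmall_countable (Set.countable_singleton i))

lemma isOpen_inl_range {X Q : Type} :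
    IsOpen ({w : GadB X Q | ∃ i, w = Sum.inl i}) := by
  intro h
  exfalso
  obtain ⟨i, hi⟩ := h
  exact Sum.inr_ne_inl hi

/-- Any continuous map from a preconnected second-countable space to the gadget is constant. -/
theorem gadB_constant {X Q D : Type} [TopologicalSpace D] [PreconnectedSpace D]
    [SecondCountableTopology D] (g : C(D, GadB X Q)) (d d' : D) : g d = g d' := by
  classical
  set B : Set D := g ⁻¹' {w : GadB X Q | ∃ i, w = Sum.inl i} with hBdef
  have hBopen : IsOpen B := (isOpen_inl_range).preimage g.continuous
  set A : Set D := g ⁻¹' {Sum.inr ()} with hAdef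
  have hAB : A = Bᶜ := by
    ext d₀
    cases h : g d₀ with
    | inl i => simp [hAdef, hBdef, h]; exact ⟨fun h' => absurd (Set.mem_singleton_iff.mp h') Sum.inl_ne_inr, fun h' => absurd rfl (h' i)⟩
    | inr u => simp [hAdef, hBdef, h]; exact Set.mem_singleton_iff.mpr rfl
  -- countable dense subset of B
  obtain ⟨S, hScount, hSdense⟩ := TopologicalSpace.exists_countable_dense (↥B)
  -- the index values attained on S
  set vals : Set (GIdx X Q) := {i | ∃ b : ↥B, b ∈ S ∧ g b = Sum.inl i} with hvals
  have hvals_count : vals.Countable := by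
    have : vals ⊆ (fun b : ↥B => Classical.choose (show ∃ i, g (b : D) = Sum.inl i from b.2)) '' S := by
      intro i hi
      obtain ⟨b, hbS, hb⟩ := hi
      refine ⟨b, hbS, ?_⟩
      have hspec := Classical.choose_spec (show ∃ j, g (b : D) = Sum.inl j from b.2)
      have := hb.symm.trans hspec
      exact (Sum.inl.inj this).symm
    exact Set.Countable.mono this (hScount.image _)
  set W : Set (GadB X Q) := {Sum.inr ()} ∪ (Sum.inl '' valsᶜ) with hW
  have hWopen : IsOpen W := by
    intro _
    have : {i | Sum.inl i ∉ W} ⊆ vals := by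
      intro i hi
      simp only [hW, Set.mem_setOf_eq, Set.mem_union, Set.mem_singleton_iff,
        Set.mem_image] at hi
      by_contra hiv
      exact hi (Set.mem_union_right _ (Set.mem_image_of_mem Sum.inl hiv))
    exact GSmall_mono this (gsmall_countable hvals_count)
  have hAW : A ⊆ g ⁻¹' W := by
    intro x hx
    simp only [hAdef, Set.mem_preimage, Set.mem_singleton_iff] at hx
    simp [hW, hx]
  have hVB : g ⁻¹' W ∩ B = ∅ := by
    by_contra hne
    obtain ⟨x, hxV, hxB⟩ := Set.nonempty_iff_ne_empty.mpr hne
    -- the set (Subtype.val ⁻¹' (g ⁻¹' W)) is open and nonempty in ↥B, so meets S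
    have hopen : IsOpen (Subtype.val ⁻¹' (g ⁻¹' W) : Set ↥B) :=
      (hWopen.preimage g.continuous).preimage continuous_subtype_val
    have hne' : (Subtype.val ⁻¹' (g ⁻¹' W) : Set ↥B).Nonempty := ⟨⟨x, hxB⟩, hxV⟩
    obtain ⟨s, hsS, hsV⟩ := hSdense.exists_mem_open hopen hne'
    -- g s = inl i with i ∈ vals, but also g s ∈ W forces i ∉ vals
    obtain ⟨i, hi⟩ := (s : ↥B).2
    have hivals : i ∈ vals := ⟨s, hsS, hi⟩
    have : g (s : D) ∈ W := hsV
    rw [hi] at this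
    simp only [hW, Set.mem_union, Set.mem_singleton_iff, Set.mem_image] at this
    rcases this with h | ⟨j, hj, hji⟩
    · exact Sum.inl_ne_inr (Set.mem_singleton_iff.mp h)
    · have := Sum.inl.inj hji
      rw [this] at hj
      exact hj hivals
  have hVA : g ⁻¹' W ⊆ A := by
    intro x hx
    rw [hAB]
    intro hxB
    exact Set.eq_empty_iff_forall_notMem.mp hVB x ⟨hx, hxB⟩
  have hAeq : A = g ⁻¹' W := Set.Subset.antisymm hAW hVA
  have hAopen : IsOpen A := hAeq ▸ hWopen.preimage g.continuous
  have hAclosed : IsClosed A := by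
    rw [hAB]
    exact hBopen.isClosed_compl
  have hclopen : IsClopen A := ⟨hAclosed, hAopen⟩
  rcases isClopen_iff.mp hclopen with hempty | huniv
  · -- all values are of the form inl; fibres are clopen
    have hd : ∀ x : D, ∃ i, g x = Sum.inl i := by
      intro x
      cases h : g x with
      | inl i => exact ⟨i, rfl⟩
      | inr u =>
        exfalso
        have : x ∈ A := by simp [hAdef, h]; exact Set.mem_singleton_iff.mpr rfl
        rw [hempty] at this
        exact this
    obtain ⟨i₀, hi₀⟩ := hd d
    set F : Set D := g ⁻¹' {Sum.inl i₀} with hF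
    have hFopen : IsOpen F := (isOpen_inl_singleton i₀).preimage g.continuous
    have hFclosed : IsClosed F := by
      have hcompl : IsOpen (Fᶜ) := by
        have heq : Fᶜ = g ⁻¹' ({Sum.inl i₀}ᶜ) := by
          ext x; simp [hF]
        rw [heq]
        exact (isOpen_compl_inl_singleton i₀).preimage g.continuous
      exact isOpen_compl_iff.mp hcompl
    rcases isClopen_iff.mp ⟨hFclosed, hFopen⟩ with hF0 | hF1
    · exfalso
      have : d ∈ F := by simp [hF, hi₀]; exact Set.mem_singleton_iff.mpr rfl
      rw [hF0] at this
      exact this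
    · have hd' : d' ∈ F := by rw [hF1]; trivial
      have : g d' = Sum.inl i₀ := hd'
      rw [this, hi₀]
  · have h1 : d ∈ A := by rw [huniv]; trivial
    have h2 : d' ∈ A := by rw [huniv]; trivial
    simp only [hAdef, Set.mem_preimage, Set.mem_singleton_iff] at h1 h2
    rw [h1, h2]

/-! ### Path-connectedness instances -/

instance : PathConnectedSpace unitInterval := by
  rw [← isPathConnected_iff_pathConnectedSpace]
  exact (convex_Icc (0:ℝ) 1).isPathConnected ⟨0, by norm_num⟩

instance pathConnectedSpace_pi {ι : Type*} {π : ι → Type*} [∀ i, TopologicalSpace (π i)]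
    [∀ i, PathConnectedSpace (π i)] : PathConnectedSpace (∀ i, π i) := by
  constructor
  · exact ⟨fun i => (PathConnectedSpace.nonempty (X := π i)).some⟩
  · intro x y
    have p : ∀ i, Path (x i) (y i) :=
      fun i => (PathConnectedSpace.joined (x i) (y i)).somePath
    exact ⟨⟨⟨fun t i => p i t, by
      apply continuous_pi
      intro i
      exact (p i).continuous.comp continuous_id⟩,
      by ext i; simp, by ext i; simp⟩⟩

/-! ### The gadget weak equivalence -/

def gadF (X Q : Type) : C(GadA X Q, GadB X Q) :=
  ⟨fun a => a, continuous_of_discreteTopology⟩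

def bigF (X Q : Type) [TopologicalSpace Q] : C(GadA X Q × Q, GadB X Q × Q) :=
  (gadF X Q).prodMap (ContinuousMap.id Q)

lemma bigF_apply {X Q : Type} [TopologicalSpace Q] (a : GadA X Q × Q) :
    bigF X Q a = (a.1, a.2) := rfl

/-- The identity function from the gadget to its discrete version (as carriers). -/
def toA {X Q : Type} (w : GadB X Q) : GadA X Q := w


lemma GenLoop.homotopic_of_carrier_eq {N Z : Type*} [TopologicalSpace Z] {z : Z}
    (a b : GenLoop N Z z) (h : ∀ y, a.1 y = b.1 y) : GenLoop.Homotopic a b := by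
  have : a = b := Subtype.ext (ContinuousMap.ext h)
  rw [this]

section WeakEquiv

variable {X Q : Type} [TopologicalSpace Q]

theorem bigF_weq : IsWeakHomotopyEquiv (bigF X Q) := by
  classical
  constructor
  · -- zerothMap bijective
    constructor
    · -- injective
      intro a b hab
      induction a using Quotient.inductionOn with
      | _ α =>
      induction b using Quotient.inductionOn with
      | _ β =>
      have h := Quotient.exact hab
      obtain ⟨ρ⟩ := h
      -- first components equal
      have h1 : (bigF X Q α).1 = (bigF X Q β).1 := by
        have hc := gadB_constant (X := X) (Q := Q)
          ((ContinuousMap.fst (α := GadB X Q) (β := Q)).comp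
            ⟨fun t => ρ t, ρ.continuous⟩) 0 1
        simpa using hc
      have h2 : Joined (bigF X Q α).2 (bigF X Q β).2 :=
        ⟨ρ.map (continuous_snd : Continuous (Prod.snd : GadB X Q × Q → Q))⟩
      apply Quotient.sound
      obtain ⟨ρ₂⟩ := h2
      have h1' : α.1 = β.1 := h1
      refine ⟨?_⟩
      have hβ : β = (α.1, β.2) := by
        rw [Prod.ext_iff]
        exact ⟨h1'.symm, rfl⟩
      rw [show α = (α.1, α.2) from rfl, hβ]
      exact (Path.refl α.1).prod ρ₂
    · -- surjective
      intro b
      induction b using Quotient.inductionOn with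
      | _ β =>
      refine ⟨Quotient.mk _ (toA β.1, β.2), ?_⟩
      apply Quotient.sound
      exact ⟨Path.refl β⟩
  · -- piMap bijective
    intro n α
    constructor
    · -- injective
      intro a b hab
      induction a using Quotient.inductionOn with
      | _ u =>
      induction b using Quotient.inductionOn with
      | _ u' =>
      have h := Quotient.exact hab
      obtain ⟨HH⟩ := h
      have hconst : ∀ (z z' : unitInterval × (Fin n → unitInterval)),
          (HH z).1 = (HH z').1 := by
        intro z z'
        exact gadB_constant (X := X) (Q := Q)
          ((ContinuousMap.fst (α := GadB X Q) (β := Q)).comp HH.toContinuousMap) z z'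
      apply Quotient.sound
      refine ⟨{
        toFun := fun z => ((u.1 z.2).1, (HH z).2)
        continuous_toFun := by
          refine Continuous.prodMk ?_ ?_
          · exact (continuous_fst.comp (u.1.continuous.comp continuous_snd))
          · exact continuous_snd.comp HH.toContinuousMap.continuous
        map_zero_left := by
          intro y
          have h0 : HH (0, y) = ((bigF X Q).comp u.1) y := HH.apply_zero y
          show ((u.1 y).1, (HH (0, y)).2) = u.1 y
          rw [h0]
          rfl
        map_one_left := by
          intro y
          have h1 : HH (1, y) = ((bigF X Q).comp u'.1) y := HH.apply_one y
          have hfst : (u.1 y).1 = (u'.1 y).1 := by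
            have e := hconst (0, y) (1, y)
            rw [HH.apply_zero y, HH.apply_one y] at e
            exact e
          show ((u.1 y).1, (HH (1, y)).2) = u'.1 y
          rw [h1, Prod.ext_iff]
          exact ⟨hfst, rfl⟩
        prop' := by
          intro t y hy
          have hrel : HH (t, y) = ((bigF X Q).comp u.1) y := HH.eq_fst t hy
          show ((u.1 y).1, (HH (t, y)).2) = u.1 y
          rw [hrel]
          rfl }⟩
    · -- surjective
      intro b
      induction b using Quotient.inductionOn with
      | _ g =>
      have hconst : ∀ (y y' : Fin n → unitInterval), (g.1 y).1 = (g.1 y').1 := fun y y' =>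
        gadB_constant ((ContinuousMap.fst (α := GadB X Q) (β := Q)).comp g.1) y y'
      set y₀ : Fin n → unitInterval := fun _ => 0 with hy₀
      have hcont : Continuous (fun y : Fin n → unitInterval =>
          ((toA (g.1 y₀).1), (g.1 y).2)) :=
        Continuous.prodMk continuous_const (continuous_snd.comp g.1.continuous)
      have hbdry : ∀ y ∈ Cube.boundary (Fin n),
          (⟨fun y => (toA (g.1 y₀).1, (g.1 y).2), hcont⟩ : C(_, GadA X Q × Q)) y = α := by
        intro y hy
        have hb : g.1 y = bigF X Q α := g.2 y hy
        have h1 : (g.1 y₀).1 = (bigF X Q α).1 := by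
          have e := hconst y₀ y
          rw [hb] at e
          exact e
        have h2 : (g.1 y).2 = (bigF X Q α).2 := by rw [hb]
        show (toA (g.1 y₀).1, (g.1 y).2) = α
        rw [Prod.ext_iff]
        exact ⟨h1, h2⟩
      refine ⟨Quotient.mk _ ⟨⟨fun y => (toA (g.1 y₀).1, (g.1 y).2), hcont⟩, hbdry⟩, ?_⟩
      apply Quotient.sound
      refine GenLoop.homotopic_of_carrier_eq _ _ ?_
      intro y
      show ((g.1 y₀).1, (g.1 y).2) = g.1 y
      rw [Prod.ext_iff]
      exact ⟨hconst y₀ y, rfl⟩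

end WeakEquiv


section Master

variable {X : Type} [TopologicalSpace X]

/-- cardinality facts -/
lemma mk_Q_le (X Q : Type) : Cardinal.mk Q ≤ GCard X Q := by
  have h1 : Cardinal.mk Q ≤ Cardinal.mk (X ⊕ Q ⊕ ℕ) :=
    Cardinal.mk_le_of_injective (f := fun v => Sum.inr (Sum.inl v))
      (fun a b h => by simpa using h)
  refine h1.trans (le_of_lt ?_)
  rw [GCard, Cardinal.mk_set]
  exact Cardinal.cantor _

lemma mk_SetX_le (X Q : Type) : Cardinal.mk (Set X) ≤ GCard X Q := by
  rw [GCard]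
  refine Cardinal.mk_le_of_injective (f := fun S => (Sum.inl '' S : Set (X ⊕ Q ⊕ ℕ))) ?_
  intro S T h
  exact Set.image_injective.mpr Sum.inl_injective h

/-- The master lemma: if `X` inverts weak equivalences, then any two maps `Q → X`
are homotopic. -/
theorem master (hP : InvertsWeakEquivs X) (Q : Type) [TopologicalSpace Q]
    (p q : C(Q, X)) : p.Homotopic q := by
  classical
  -- apply the hypothesis to the gadget weak equivalence
  have hbij := hP (GadA X Q × Q) (GadB X Q × Q) (bigF X Q) bigF_weq
  -- the target class
  have hg₀cont : Continuous (fun z : GadA X Q × Q =>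
      Sum.elim (fun _ : GIdx X Q => p z.2) (fun _ : Unit => q z.2) z.1) := by
    rw [continuous_def]
    intro U hU
    have : (fun z : GadA X Q × Q =>
        Sum.elim (fun _ : GIdx X Q => p z.2) (fun _ : Unit => q z.2) z.1) ⁻¹' U =
        ({w : GadA X Q | ∃ i, w = Sum.inl i} ×ˢ (p ⁻¹' U)) ∪
        ({w : GadA X Q | w = Sum.inr ()} ×ˢ (q ⁻¹' U)) := by
      ext z
      obtain ⟨w, v⟩ := z
      cases w with
      | inl i => simp; exact ⟨fun h' => Or.inl ⟨(show ∃ j, (Sum.inl i : GadA X Q) = Sum.inl j from ⟨i, rfl⟩), h'⟩, fun h' => h'.elim And.right (fun h'' => absurd h''.1 Sum.inl_ne_inr)⟩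
      | inr u => simp; exact ⟨fun h' => Or.inr ⟨(show (Sum.inr u : GadA X Q) = Sum.inr () from rfl), h'⟩, fun h' => h'.elim (fun h'' => absurd h''.1 (fun hx => by obtain ⟨j, hj⟩ := hx; exact Sum.inr_ne_inl hj)) And.right⟩
    rw [this]
    refine IsOpen.union (IsOpen.prod ?_ (hU.preimage p.continuous))
      (IsOpen.prod ?_ (hU.preimage q.continuous))
    · exact isOpen_discrete _
    · exact isOpen_discrete _
  set g₀ : C(GadA X Q × Q, X) := ⟨fun z =>
      Sum.elim (fun _ : GIdx X Q => p z.2) (fun _ : Unit => q z.2) z.1, hg₀cont⟩ with hg₀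
  obtain ⟨Mc, hMc⟩ := hbij.2 (Quotient.mk _ g₀)
  induction Mc using Quotient.inductionOn with
  | _ M =>
  have hhom : (M.comp (bigF X Q)).Homotopic g₀ := Quotient.exact hMc
  obtain ⟨hty⟩ := hhom
  -- slice homotopies
  have slice : ∀ w : GadA X Q, Continuous (fun z : unitInterval × Q => hty (z.1, (w, z.2))) := by
    intro w
    exact hty.toContinuousMap.continuous.comp
      (by continuity)
  -- the map at a gadget point, as a continuous map Q → X
  have colcont : ∀ w : GadB X Q, Continuous (fun v : Q => M (w, v)) := by
    intro w
    exact M.continuous.comp (by continuity)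
  set col : GadB X Q → C(Q, X) := fun w => ⟨fun v => M (w, v), colcont w⟩ with hcol
  -- each finite column is homotopic to p
  have hcolp : ∀ i : GIdx X Q, (col (Sum.inl i)).Homotopic p := by
    intro i
    refine ⟨{
      toFun := fun z => hty (z.1, (Sum.inl i, z.2))
      continuous_toFun := slice (Sum.inl i)
      map_zero_left := by
        intro v
        show hty (0, (Sum.inl i, v)) = _
        rw [hty.apply_zero]
        rfl
      map_one_left := by
        intro v
        show hty (1, (Sum.inl i, v)) = _
        rw [hty.apply_one]
        rfl }⟩
  -- the infinity column is homotopic to q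
  have hcolq : (col (Sum.inr ())).Homotopic q := by
    refine ⟨{
      toFun := fun z => hty (z.1, (Sum.inr (), z.2))
      continuous_toFun := slice (Sum.inr ())
      map_zero_left := by
        intro v
        show hty (0, (Sum.inr (), v)) = _
        rw [hty.apply_zero]
        rfl
      map_one_left := by
        intro v
        show hty (1, (Sum.inr (), v)) = _
        rw [hty.apply_one]
        rfl }⟩
  -- find a single index specializing the infinity column
  set T : Q × Set X → Set (GIdx X Q) := fun j =>
    if IsOpen j.2 ∧ M (Sum.inr (), j.1) ∈ j.2 then {i | M (Sum.inl i, j.1) ∈ j.2} else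
      Set.univ with hT
  have hTsmall : ∀ j, GSmall X Q (T j)ᶜ := by
    intro j
    obtain ⟨v, U⟩ := j
    by_cases hcond : IsOpen U ∧ M (Sum.inr (), v) ∈ U
    · obtain ⟨hUopen, hmem⟩ := hcond
      have hopen : IsOpen (M ⁻¹' U) := hUopen.preimage M.continuous
      obtain ⟨W₁, W₂, hW₁, hW₂, hw₁, hw₂, hsub⟩ :=
        isOpen_prod_iff.mp hopen (Sum.inr ()) v hmem
      have hsmall : GSmall X Q {i | Sum.inl i ∉ W₁} := hW₁ hw₁
      refine GSmall_mono ?_ hsmall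
      intro i hi
      simp only [hT, hUopen, hmem, and_self, if_true, Set.mem_compl_iff,
        Set.mem_setOf_eq] at hi
      intro hiW₁
      exact hi (hsub (Set.mk_mem_prod hiW₁ hw₂))
    · have : T (v, U) = Set.univ := by
        rw [hT]
        simp only [hcond, if_false]
      rw [this]
      simpa using GSmall_empty X Q
  -- the union of all the complements is not everything
  have hUU : (⋃ j, (T j)ᶜ) ≠ Set.univ := by
    intro hcontra
    have h1 : Cardinal.mk (⋃ j, (T j)ᶜ) ≤
        Cardinal.mk (Q × Set X) * ⨆ j, Cardinal.mk ((T j)ᶜ : Set (GIdx X Q)) :=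
      Cardinal.mk_iUnion_le _
    have h2 : Cardinal.mk (Q × Set X) ≤ GCard X Q := by
      have := Cardinal.mk_prod Q (Set X)
      rw [this]
      simp only [Cardinal.lift_id]
      calc Cardinal.mk Q * Cardinal.mk (Set X) ≤ GCard X Q * GCard X Q :=
            mul_le_mul' (mk_Q_le X Q) (mk_SetX_le X Q)
        _ = GCard X Q := Cardinal.mul_eq_self (GCard_infinite X Q)
    have h3 : (⨆ j, Cardinal.mk ((T j)ᶜ : Set (GIdx X Q))) ≤ GCard X Q :=
      ciSup_le' (fun j => hTsmall j)
    have h4 : Cardinal.mk (⋃ j, (T j)ᶜ) ≤ GCard X Q := by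
      refine h1.trans ?_
      calc Cardinal.mk (Q × Set X) * ⨆ j, Cardinal.mk ((T j)ᶜ : Set (GIdx X Q)) ≤
            GCard X Q * GCard X Q := mul_le_mul' h2 h3
        _ = GCard X Q := Cardinal.mul_eq_self (GCard_infinite X Q)
    rw [hcontra] at h4
    simp only [Cardinal.mk_univ] at h4
    exact absurd h4 (not_le.mpr (GCard_lt_GIdx X Q))
  obtain ⟨istar, histar⟩ : ∃ i : GIdx X Q, i ∉ ⋃ j, (T j)ᶜ := by
    by_contra hcontra
    push_neg at hcontra
    exact hUU (Set.eq_univ_of_forall hcontra)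
  have hkey : ∀ (v : Q) (U : Set X), IsOpen U → M (Sum.inr (), v) ∈ U →
      M (Sum.inl istar, v) ∈ U := by
    intro v U hUopen hmem
    have : istar ∈ T (v, U) := by
      by_contra h
      exact histar (Set.mem_iUnion.mpr ⟨(v, U), h⟩)
    rw [hT] at this
    simp only [hUopen, hmem, and_self, if_true, Set.mem_setOf_eq] at this
    exact this
  -- the specialization homotopy between the istar column and the infinity column
  have hspec : (col (Sum.inl istar)).Homotopic (col (Sum.inr ())) := by
    have hcont : Continuous (fun z : unitInterval × Q =>
        if z.1 = 1 then M (Sum.inr (), z.2) else M (Sum.inl istar, z.2)) := by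
      rw [continuous_def]
      intro U hU
      have heq : (fun z : unitInterval × Q =>
          if z.1 = 1 then M (Sum.inr (), z.2) else M (Sum.inl istar, z.2)) ⁻¹' U =
          ({t : unitInterval | t ≠ 1} ×ˢ ((fun v => M (Sum.inl istar, v)) ⁻¹' U)) ∪
          (Set.univ ×ˢ ((fun v => M (Sum.inr (), v)) ⁻¹' U)) := by
        ext z
        obtain ⟨t, v⟩ := z
        by_cases ht : t = 1
        · simp only [Set.mem_preimage, ht, if_true, Set.mem_union, Set.mem_prod,
            Set.mem_setOf_eq, ne_eq, not_true_eq_false, false_and, Set.mem_univ, true_and]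
          tauto
        · simp only [Set.mem_preimage, ht, if_false, Set.mem_union, Set.mem_prod,
            Set.mem_setOf_eq, ne_eq, not_false_eq_true, true_and, Set.mem_univ]
          constructor
          · intro h; left; exact h
          · intro h
            rcases h with h | h
            · exact h
            · exact hkey v U hU h
      rw [heq]
      refine IsOpen.union (IsOpen.prod isOpen_ne (hU.preimage (colcont _)))
        (IsOpen.prod isOpen_univ (hU.preimage (colcont _)))
    refine ⟨{
      toFun := fun z => if z.1 = 1 then M (Sum.inr (), z.2) else M (Sum.inl istar, z.2)
      continuous_toFun := hcont
      map_zero_left := by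
        intro v
        have h01 : (0 : unitInterval) ≠ 1 := by
          intro h
          have := congrArg Subtype.val h
          norm_num at this
        show (if (0 : unitInterval) = 1 then _ else _) = _
        rw [if_neg h01]
        rfl
      map_one_left := by
        intro v
        show (if (1 : unitInterval) = 1 then _ else _) = _
        rw [if_pos rfl]
        rfl }⟩
  -- assemble the chain
  exact ((hcolp istar).symm.trans hspec).trans hcolq

end Master

/-- A non-empty space inverts weak homotopy equivalences iff it is contractible. -/
theorem stmt0 (X : Type) [TopologicalSpace X] [Nonempty X] :
    InvertsWeakEquivs X ↔ ContractibleSpace X := by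
  constructor
  · intro hP
    rw [contractible_iff_id_nullhomotopic]
    obtain ⟨x₀⟩ := ‹Nonempty X›
    exact ⟨x₀, master hP X (ContinuousMap.id X) (ContinuousMap.const X x₀)⟩
  · intro hC
    intro A B _ _ f _
    obtain ⟨x₀, hid⟩ := (contractible_iff_id_nullhomotopic X).mp hC
    have key : ∀ (E : Type) [TopologicalSpace E] (g : C(E, X)),
        g.Homotopic (ContinuousMap.const E x₀) := by
      intro E _ g
      have h := ContinuousMap.Homotopic.comp hid (ContinuousMap.Homotopic.refl g)
      simpa using h
    have hsub : ∀ (E : Type) [TopologicalSpace E], Subsingleton (HtpyClasses E X) := by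
      intro E _
      constructor
      intro a b
      induction a using Quotient.inductionOn with
      | _ g =>
      induction b using Quotient.inductionOn with
      | _ g' =>
      exact Quotient.sound ((key E g).trans ((key E g').symm))
    constructor
    · intro a b _
      exact @Subsingleton.elim _ (hsub B) a b
    · intro c
      refine ⟨Quotient.mk _ (ContinuousMap.const B x₀), ?_⟩
      exact @Subsingleton.elim _ (hsub A) _ c
end
end

section
/- If a topological space X inverts weak homotopy equivalences and X is weakly contractible (all homotopy groups trivial and path-connected), then X is contractible. -/
open ContinuousMap Topology

noncomputable section

lemma bij_aux {α β : Sort*} [Subsingleton α] [Subsingleton β] [Nonempty α] (f : α → β) :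
    Function.Bijective f :=
  ⟨fun _ _ _ => Subsingleton.elim _ _,
   fun _ => ⟨Classical.arbitrary α, Subsingleton.elim _ _⟩⟩

instance zerothSub (X : Type*) [TopologicalSpace X] [PathConnectedSpace X] :
    Subsingleton (ZerothHomotopy X) :=
  ⟨by
    refine Quotient.ind fun a => Quotient.ind fun b => ?_
    exact Quotient.sound (PathConnectedSpace.joined a b)⟩

instance zerothSubUnit : Subsingleton (ZerothHomotopy Unit) :=
  Quotient.instSubsingletonQuotient _

instance genLoopSub (n : ℕ) (u : Unit) : Subsingleton (GenLoop (Fin n) Unit u) :=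
  ⟨fun a b => Subtype.ext (ContinuousMap.ext fun _ => rfl)⟩

instance piUnitSub (n : ℕ) (u : Unit) : Subsingleton (HomotopyGroup (Fin n) Unit u) := by
  unfold HomotopyGroup; infer_instance

instance piNonempty (n : ℕ) (X : Type*) [TopologicalSpace X] (x : X) :
    Nonempty (HomotopyGroup (Fin n) X x) :=
  ⟨⟦GenLoop.const⟧⟩


/-- If `X` inverts weak homotopy equivalences and is weakly contractible, it is contractible. -/
theorem stmt1 (X : Type) [TopologicalSpace X] (h : InvertsWeakEquivs X)
    (hpc : PathConnectedSpace X)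
    (htriv : ∀ (n : ℕ) (x : X), Subsingleton (HomotopyGroup (Fin n) X x)) :
    ContractibleSpace X := by
  have hne : Nonempty X := hpc.nonempty
  set f : C(X, Unit) := ContinuousMap.const X () with hf
  have hwe : IsWeakHomotopyEquiv f := by
    constructor
    · have : Nonempty (ZerothHomotopy X) := ⟨⟦Classical.arbitrary X⟧⟩
      exact bij_aux _
    · intro n a
      have := htriv n a
      exact bij_aux _
  obtain ⟨g, hg⟩ := (h X Unit f hwe).2 ⟦ContinuousMap.id X⟧
  obtain ⟨g', rfl⟩ := Quotient.exists_rep g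
  have hh : ContinuousMap.Homotopic (g'.comp f) (ContinuousMap.id X) :=
    Quotient.exact hg
  rw [contractible_iff_id_nullhomotopic X]
  refine ⟨g' (), hh.symm.trans ?_⟩
  have : g'.comp f = ContinuousMap.const X (g' ()) := by ext; rfl
  rw [this]
end
end

section
/- If a topological space X inverts weak homotopy equivalences, then X is connected. -/
open ContinuousMap Topology
open scoped unitInterval

noncomputable section

/-- The real line with the discrete topology. -/
def DiscR : Type := ℝ

instance : TopologicalSpace DiscR := ⊥
instance : DiscreteTopology DiscR := ⟨rfl⟩

/-- The real line with the cocountable topology. -/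
def CocR : Type := ℝ

instance : TopologicalSpace CocR where
  IsOpen s := s = ∅ ∨ sᶜ.Countable
  isOpen_univ := Or.inr (by simp)
  isOpen_inter s t hs ht := by
    rcases hs with rfl | hs
    · exact Or.inl (by simp)
    rcases ht with rfl | ht
    · exact Or.inl (by simp)
    · exact Or.inr (by rw [Set.compl_inter]; exact hs.union ht)
  isOpen_sUnion S hS := by
    by_cases hne : ∀ s ∈ S, s = (∅ : Set CocR)
    · exact Or.inl (by simpa using hne)
    · push_neg at hne
      obtain ⟨s, hsS, hs⟩ := hne
      rcases hS s hsS with rfl | hc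
      · simp at hs
      · exact Or.inr (Set.Countable.mono (by
          simp only [Set.compl_subset_compl]
          exact Set.subset_sUnion_of_mem hsS) hc)

lemma CocR.isOpen_iff {s : Set CocR} : IsOpen s ↔ s = ∅ ∨ sᶜ.Countable := Iff.rfl

lemma CocR.not_countable_univ : ¬ (Set.univ : Set CocR).Countable :=
  Cardinal.not_countable_real

instance : T1Space CocR := by
  constructor
  intro x
  rw [← isOpen_compl_iff]
  exact Or.inr (by simp)

instance : PreirreducibleSpace CocR := by
  constructor
  rintro u v hu hv ⟨x, -, hx⟩ ⟨y, -, hy⟩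
  rcases hu with rfl | hu
  · exact absurd hx (Set.notMem_empty x)
  rcases hv with rfl | hv
  · exact absurd hy (Set.notMem_empty y)
  rcases Set.eq_empty_or_nonempty (u ∩ v) with he | hne
  · refine absurd ?_ CocR.not_countable_univ
    have hc : ((u ∩ v)ᶜ : Set CocR).Countable := by
      rw [Set.compl_inter]; exact hu.union hv
    rwa [he, Set.compl_empty] at hc
  · obtain ⟨z, hz⟩ := hne
    exact ⟨z, trivial, hz⟩

lemma CocR.finite_of_isCompact {s : Set CocR} (hs : IsCompact s) : s.Finite := by
  by_contra hinf
  let g : ℕ ↪ s := Set.Infinite.natEmbedding s hinf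
  have hginj : Function.Injective (fun m : ℕ => ((g m : s) : CocR)) :=
    fun m m' h => g.injective (Subtype.ext h)
  let U : ℕ → Set CocR := fun n => ((fun m : ℕ => ((g m : s) : CocR)) '' Set.Ici n)ᶜ
  have hUo : ∀ n, IsOpen (U n) := fun n =>
    Or.inr (by rw [compl_compl]; exact (Set.to_countable _).image _)
  have hmono : Monotone U := fun n n' hnn' =>
    Set.compl_subset_compl.mpr (Set.image_mono (Set.Ici_subset_Ici.mpr hnn'))
  have hcov : s ⊆ ⋃ n, U n := by
    intro x hx
    by_cases hm : ∃ m : ℕ, ((g m : s) : CocR) = x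
    · obtain ⟨m, hmx⟩ := hm
      refine Set.mem_iUnion.mpr ⟨m + 1, fun hmem => ?_⟩
      obtain ⟨m', hm', hm'x⟩ := hmem
      have hmm : m' = m := hginj (hm'x.trans hmx.symm)
      rw [Set.mem_Ici] at hm'
      omega
    · push_neg at hm
      exact Set.mem_iUnion.mpr ⟨0, fun hmem => by
        obtain ⟨m', -, hm'x⟩ := hmem; exact hm m' hm'x⟩
  obtain ⟨n, hn⟩ := hs.elim_directed_cover U hUo hcov hmono.directed_le
  exact (hn (g n).2) ⟨n, le_refl n, rfl⟩

/-- Every continuous map from a compact preconnected space to `CocR` is constant. -/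
lemma CocR.const_of_continuous {K : Type*} [TopologicalSpace K] [CompactSpace K]
    [PreconnectedSpace K] {q : K → CocR} (hq : Continuous q) (k k' : K) : q k = q k' := by
  have hfin : (Set.range q).Finite := CocR.finite_of_isCompact (isCompact_range hq)
  have : Finite (Set.range q) := hfin.to_subtype
  exact IsPreconnected.constant_of_mapsTo (PreconnectedSpace.isPreconnected_univ)
    (isDiscrete_iff_discreteTopology.mpr inferInstance) hq.continuousOn (fun z _ => Set.mem_range_self z) trivial trivial

/-- The identity, as a map from the discrete reals to the cocountable reals. -/
def idMap : C(DiscR, CocR) := ⟨fun r => r, continuous_of_discreteTopology⟩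

lemma idMap_isWeakHomotopyEquiv : IsWeakHomotopyEquiv idMap := by
  constructor
  · constructor
    · intro p q hpq
      obtain ⟨a, rfl⟩ := Quotient.exists_rep p
      obtain ⟨b, rfl⟩ := Quotient.exists_rep q
      have hj : Joined (idMap a) (idMap b) := Quotient.exact hpq
      obtain ⟨γ⟩ := hj
      have hab : a = b := by
        show idMap a = idMap b
        have h01 : γ 0 = γ 1 := CocR.const_of_continuous γ.continuous 0 1
        rw [γ.source, γ.target] at h01
        exact h01
      rw [hab]
    · intro q
      obtain ⟨b, rfl⟩ := Quotient.exists_rep q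
      exact ⟨Quotient.mk _ (show DiscR from b), rfl⟩
  · intro n a
    constructor
    · intro pc qc hpq
      obtain ⟨p, rfl⟩ := Quotient.exists_rep pc
      obtain ⟨q, rfl⟩ := Quotient.exists_rep qc
      obtain ⟨H⟩ : GenLoop.Homotopic
          ⟨idMap.comp p.1, fun y hy => by rw [ContinuousMap.comp_apply, p.2 y hy]⟩
          ⟨idMap.comp q.1, fun y hy => by rw [ContinuousMap.comp_apply, q.2 y hy]⟩ :=
        Quotient.exact hpq
      have hpq' : p = q := by
        apply Subtype.ext
        apply ContinuousMap.ext
        intro y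
        show (idMap.comp p.1) y = (idMap.comp q.1) y
        rw [← H.apply_zero y, ← H.apply_one y]
        exact CocR.const_of_continuous H.toHomotopy.continuous (0, y) (1, y)
      rw [hpq']
    · intro qc
      obtain ⟨q, rfl⟩ := Quotient.exists_rep qc
      let y₀ : I^(Fin n) := fun _ => 0
      have hq : ∀ y, q.1 y = q.1 y₀ := fun y =>
        CocR.const_of_continuous q.1.continuous y y₀
      have hbd : ∀ y ∈ Cube.boundary (Fin n),
          (ContinuousMap.const _ (show DiscR from q.1 y₀)) y = a :=
        fun y hy => (hq y).symm.trans (q.2 y hy)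
      refine ⟨Quotient.mk _ ⟨ContinuousMap.const _ (show DiscR from q.1 y₀), hbd⟩, ?_⟩
      have he : (⟨idMap.comp (ContinuousMap.const _ (show DiscR from q.1 y₀)),
          fun y hy => by rw [ContinuousMap.comp_apply, hbd y hy]⟩ :
            GenLoop (Fin n) CocR (idMap a)) = q :=
        Subtype.ext (ContinuousMap.ext fun y => (hq y).symm)
      exact congrArg (Quotient.mk _) he

/-- If `X` inverts weak homotopy equivalences, then `X` is connected. -/
theorem stmt2 (X : Type) [TopologicalSpace X] (h : InvertsWeakEquivs X) :
    PreconnectedSpace X := by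
  apply preconnectedSpace_of_forall_constant
  intro χ hχ x y
  classical
  let g : C(DiscR, X) := ⟨fun r => if r = (show DiscR from (0 : ℝ)) then x else y,
    continuous_of_discreteTopology⟩
  obtain ⟨c, hc⟩ := (h DiscR CocR idMap idMap_isWeakHomotopyEquiv).2 (Quotient.mk _ g)
  obtain ⟨h₀, rfl⟩ := Quotient.exists_rep c
  obtain ⟨H⟩ : ContinuousMap.Homotopic (h₀.comp idMap) g := Quotient.exact hc
  have key : ∀ a : DiscR, χ (h₀ (idMap a)) = χ (g a) := by
    intro a
    have hpath : Continuous fun t : I => H (t, a) :=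
      H.continuous.comp (by continuity)
    have := PreconnectedSpace.constant (inferInstance : PreconnectedSpace I)
      (hχ.comp hpath) (x := 0) (y := 1)
    simpa [H.apply_zero, H.apply_one] using this
  have hconn : χ (h₀ (idMap (show DiscR from (0:ℝ)))) = χ (h₀ (idMap (show DiscR from (1:ℝ)))) :=
    PreconnectedSpace.constant (inferInstance : PreconnectedSpace CocR)
      (hχ.comp h₀.continuous)
  have h0 : g (show DiscR from (0:ℝ)) = x := if_pos rfl
  have h1 : g (show DiscR from (1:ℝ)) = y := if_neg (show ¬ ((1:ℝ) = (0:ℝ)) by norm_num)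
  calc χ x = χ (g (show DiscR from (0:ℝ))) := by rw [h0]
    _ = χ (h₀ (idMap (show DiscR from (0:ℝ)))) := (key _).symm
    _ = χ (h₀ (idMap (show DiscR from (1:ℝ)))) := hconn
    _ = χ (g (show DiscR from (1:ℝ))) := key _
    _ = χ y := by rw [h1]
end
end

section
/- If a topological space X inverts weak homotopy equivalences, then X is path-connected. -/
open ContinuousMap Topology

noncomputable section

open Cardinal

def ConstMaps (T : Type) [TopologicalSpace T] : Prop :=
  ∀ (K : Type) [TopologicalSpace K] [CompactSpace K] [PreconnectedSpace K]
    (f : C(K, T)) (a b : K), f a = f b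

theorem constMaps_of_discrete (T : Type) [TopologicalSpace T] [DiscreteTopology T] :
    ConstMaps T := by
  intro K _ _ _ f a b
  have hclopen : IsClopen (f ⁻¹' {f a}) :=
    ⟨(isClosed_discrete _).preimage f.continuous, (isOpen_discrete _).preimage f.continuous⟩
  have : f ⁻¹' {f a} = Set.univ := hclopen.eq_univ ⟨a, rfl⟩
  have hb : b ∈ f ⁻¹' {f a} := this ▸ Set.mem_univ b
  exact hb.symm

/-- The "complement has cardinality at most `b`" topology. -/
def cosmallTop (V : Type) (b : Cardinal) (hb : ℵ₀ ≤ b) : TopologicalSpace V where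
  IsOpen U := U = ∅ ∨ #(Uᶜ : Set V) ≤ b
  isOpen_univ := Or.inr (by simp)
  isOpen_inter := by
    rintro U W (rfl | hU) hW
    · left; simp
    rcases hW with rfl | hW
    · left; simp
    right
    rw [Set.compl_inter]
    calc #((Uᶜ ∪ Wᶜ) : Set V) ≤ #(Uᶜ : Set V) + #(Wᶜ : Set V) := mk_union_le _ _
      _ ≤ b + b := add_le_add hU hW
      _ = b := add_eq_self hb
  isOpen_sUnion := by
    intro 𝒮 hS
    by_cases hne : ∃ U ∈ 𝒮, U ≠ ∅
    · obtain ⟨U, hU𝒮, hUne⟩ := hne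
      right
      refine le_trans (mk_le_mk_of_subset ?_) ((hS U hU𝒮).resolve_left hUne)
      exact Set.compl_subset_compl.mpr (Set.subset_sUnion_of_mem hU𝒮)
    · left
      push_neg at hne
      exact Set.sUnion_eq_empty.mpr hne

section Cosmall

variable (V : Type) (b : Cardinal) (hb : ℵ₀ ≤ b)

theorem cosmall_isOpen_of_compl_small {U : Set V} (h : #(Uᶜ : Set V) ≤ b) :
    IsOpen[cosmallTop V b hb] U := Or.inr h

theorem cosmall_compact_finite :
    ∀ s : Set V, @IsCompact V (cosmallTop V b hb) s → s.Finite := by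
  letI : TopologicalSpace V := cosmallTop V b hb
  intro s hs
  by_contra hfin
  have hinf : s.Infinite := hfin
  let e : ℕ ↪ s := hinf.natEmbedding s
  set D : ℕ → V := fun n => (e n : V) with hD
  have hDinj : Function.Injective D := fun m n h => by
    have := Subtype.coe_injective h
    exact e.injective this
  set F : ℕ → Set V := fun n => (D '' Set.Ici n)ᶜ with hF
  have hFopen : ∀ n, IsOpen (F n) := by
    intro n
    refine Or.inr ?_
    rw [compl_compl]
    have hcnt : (D '' Set.Ici n).Countable := (Set.to_countable _).image D
    exact le_trans (mk_le_aleph0_iff.mpr hcnt.to_subtype) hb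
  have hcover : s ⊆ ⋃ n, F n := by
    intro v hv
    by_cases hvD : v ∈ Set.range D
    · obtain ⟨m, rfl⟩ := hvD
      refine Set.mem_iUnion.mpr ⟨m + 1, ?_⟩
      intro hmem
      obtain ⟨j, hj, hji⟩ := hmem
      have hj' : m + 1 ≤ j := hj
      exact absurd (hDinj hji).symm (by omega)
    · refine Set.mem_iUnion.mpr ⟨0, ?_⟩
      intro hmem
      obtain ⟨j, _, hji⟩ := hmem
      exact hvD ⟨j, hji⟩
  obtain ⟨t, ht⟩ := hs.elim_finite_subcover F hFopen hcover
  set N := t.sup id with hN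
  have hFmono : ∀ {m n : ℕ}, m ≤ n → F m ⊆ F n := by
    intro m n hmn
    apply Set.compl_subset_compl.mpr
    exact Set.image_mono (f := D) (Set.Ici_subset_Ici.mpr hmn)
  have hsub : s ⊆ F N := by
    intro v hv
    obtain ⟨n, hn, hvn⟩ := Set.mem_iUnion₂.mp (ht hv)
    exact hFmono (Finset.le_sup (f := id) hn) hvn
  have hDN : D N ∈ s := (e N).2
  exact (hsub hDN) ⟨N, le_refl N, rfl⟩

theorem constMaps_cosmall : @ConstMaps V (cosmallTop V b hb) := by
  letI : TopologicalSpace V := cosmallTop V b hb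
  intro K _ _ _ f a c
  have hfin : (Set.range f).Finite :=
    cosmall_compact_finite V b hb _ (isCompact_range f.continuous)
  -- finite sets are closed
  have hfinclosed : ∀ s : Set V, s.Finite → IsClosed s := by
    intro s hsf
    rw [← isOpen_compl_iff]
    refine Or.inr ?_
    rw [compl_compl]
    exact le_trans (mk_le_aleph0_iff.mpr hsf.countable.to_subtype) hb
  set A : Set K := f ⁻¹' {f a} with hA
  have hAclosed : IsClosed A := (hfinclosed _ (Set.finite_singleton _)).preimage f.continuous
  have hAcompl : Aᶜ = f ⁻¹' (Set.range f \ {f a}) := by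
    ext z
    simp [hA, Set.mem_preimage, Set.mem_range]
  have hAopen : IsOpen A := by
    have : IsClosed Aᶜ := by
      rw [hAcompl]
      exact (hfinclosed _ (hfin.subset Set.diff_subset)).preimage f.continuous
    simpa using this.isOpen_compl
  have : A = Set.univ := IsClopen.eq_univ ⟨hAclosed, hAopen⟩ ⟨a, rfl⟩
  have hc : c ∈ A := this ▸ Set.mem_univ c
  exact hc.symm

end Cosmall

section ConstConsequences

variable {T : Type} [TopologicalSpace T]

theorem ConstMaps.joined_eq (hT : ConstMaps T) {a b : T} (h : Joined a b) : a = b := by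
  obtain ⟨γ⟩ := h
  have := hT unitInterval γ.toContinuousMap 0 1
  simpa using this

theorem ConstMaps.genLoop_const (hT : ConstMaps T) {n : ℕ} {t : T}
    (p : GenLoop (Fin n) T t) (y z : (Fin n) → unitInterval) : p.1 y = p.1 z :=
  hT ((Fin n) → unitInterval) p.1 y z

theorem ConstMaps.homotopic_val (hT : ConstMaps T) {n : ℕ} {t : T}
    {p q : GenLoop (Fin n) T t} (h : GenLoop.Homotopic p q)
    (y : (Fin n) → unitInterval) : p.1 y = q.1 y := by
  obtain ⟨H⟩ := h
  have := hT (unitInterval × ((Fin n) → unitInterval))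
    H.toHomotopy.toContinuousMap (0, y) (1, y)
  have h0 : H.toHomotopy.toContinuousMap (0, y) = p.1 y := H.toHomotopy.apply_zero y
  have h1 : H.toHomotopy.toContinuousMap (1, y) = q.1 y := H.toHomotopy.apply_one y
  rw [h0, h1] at this
  exact this

end ConstConsequences

section WE

variable {A B : Type} [TopologicalSpace A] [TopologicalSpace B]

theorem constMaps_zeroth_bij (hA : ConstMaps A) (hB : ConstMaps B) (f : C(A, B))
    (hbij : Function.Bijective ⇑f) : Function.Bijective (zerothMap f) := by
  constructor
  · intro u v huv
    induction u using Quotient.ind with | _ a =>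
    induction v using Quotient.ind with | _ b =>
    have hJ : Joined (f a) (f b) := Quotient.exact huv
    have : a = b := hbij.1 (hB.joined_eq hJ)
    exact congrArg _ this
  · intro u
    induction u using Quotient.ind with | _ b =>
    obtain ⟨a, rfl⟩ := hbij.2 b
    exact ⟨Quotient.mk _ a, rfl⟩

theorem constMaps_pi_bij (hA : ConstMaps A) (hB : ConstMaps B) (f : C(A, B))
    (hbij : Function.Bijective ⇑f) (n : ℕ) (a : A) :
    Function.Bijective (piMap f n a) := by
  set c : (Fin n) → unitInterval := fun _ => 0 with hc
  constructor
  · intro u v huv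
    induction u using Quotient.ind with | _ p =>
    induction v using Quotient.ind with | _ q =>
    have hH : GenLoop.Homotopic
        (⟨f.comp p.1, fun y hy => by rw [ContinuousMap.comp_apply, p.2 y hy]⟩ :
          GenLoop (Fin n) B (f a))
        (⟨f.comp q.1, fun y hy => by rw [ContinuousMap.comp_apply, q.2 y hy]⟩ :
          GenLoop (Fin n) B (f a)) := Quotient.exact huv
    have hval : f (p.1 c) = f (q.1 c) := hB.homotopic_val hH c
    have hpq : p = q := by
      apply Subtype.ext
      apply ContinuousMap.ext
      intro y
      calc p.1 y = p.1 c := hA.genLoop_const p y c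
        _ = q.1 c := hbij.1 hval
        _ = q.1 y := (hA.genLoop_const q y c).symm
    exact congrArg _ hpq
  · intro u
    induction u using Quotient.ind with | _ q =>
    obtain ⟨w, hw⟩ := hbij.2 (q.1 c)
    have hbd : ∀ y ∈ Cube.boundary (Fin n), w = a := by
      intro y hy
      have h1 : q.1 y = f a := q.2 y hy
      have h2 : q.1 y = q.1 c := hB.genLoop_const q y c
      have : f w = f a := by rw [hw, ← h2, h1]
      exact hbij.1 this
    refine ⟨Quotient.mk _ ⟨ContinuousMap.const _ w, fun y hy => hbd y hy⟩, ?_⟩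
    have hsub : (⟨f.comp (ContinuousMap.const ((Fin n) → unitInterval) w), fun y hy => by
        simp only [ContinuousMap.comp_apply, ContinuousMap.const_apply]
        rw [hbd y hy]⟩ : GenLoop (Fin n) B (f a)) = q := by
      apply Subtype.ext
      apply ContinuousMap.ext
      intro y
      show f w = q.1 y
      rw [hw]
      exact hB.genLoop_const q c y
    exact congrArg (Quotient.mk _) hsub

theorem constMaps_WE (hA : ConstMaps A) (hB : ConstMaps B) (f : C(A, B))
    (hbij : Function.Bijective ⇑f) : IsWeakHomotopyEquiv f :=
  ⟨constMaps_zeroth_bij hA hB f hbij, fun n a => constMaps_pi_bij hA hB f hbij n a⟩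

end WE

/-- A point in every open set around `a` is a limit; specialization gives a path. -/
theorem joined_of_forall_open_mem {Z : Type*} [TopologicalSpace Z] {a b : Z}
    (h : ∀ U : Set Z, IsOpen U → a ∈ U → b ∈ U) : Joined a b := by
  classical
  refine ⟨⟨⟨fun t => if t = 0 then a else b, ?_⟩, by simp, ?_⟩⟩
  · rw [continuous_def]
    intro U hU
    by_cases haU : a ∈ U
    · have hbU : b ∈ U := h U hU haU
      have : (fun t : unitInterval => if t = 0 then a else b) ⁻¹' U = Set.univ := by
        ext t
        by_cases ht : t = 0 <;> simp [ht, haU, hbU]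
      rw [this]; exact isOpen_univ
    · by_cases hbU : b ∈ U
      · have : (fun t : unitInterval => if t = 0 then a else b) ⁻¹' U
            = ({0}ᶜ : Set unitInterval) := by
          ext t
          by_cases ht : t = 0 <;> simp [ht, haU, hbU]
        rw [this]; exact isOpen_compl_singleton
      · have : (fun t : unitInterval => if t = 0 then a else b) ⁻¹' U = ∅ := by
          ext t
          by_cases ht : t = 0 <;> simp [ht, haU, hbU]
        rw [this]; exact isOpen_empty
  · have h10 : (1 : unitInterval) ≠ 0 := by
      intro hh
      exact one_ne_zero (congrArg Subtype.val hh)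
    simp [h10]

section Gadget

variable (X : Type)

/-- The big carrier set. -/
def WECarrier : Type := Set (Set X ⊕ ℕ)

/-- The bound cardinal. -/
def weBound : Cardinal := #(Set X ⊕ ℕ)

theorem weBound_infinite : ℵ₀ ≤ weBound X := aleph0_le_mk _

/-- Discrete copy. -/
def WEDisc : Type := WECarrier X

/-- Co-small copy. -/
def WECosmall : Type := WECarrier X

instance : TopologicalSpace (WEDisc X) := ⊥
instance : DiscreteTopology (WEDisc X) := ⟨rfl⟩
instance : TopologicalSpace (WECosmall X) :=
  cosmallTop (WECarrier X) (weBound X) (weBound_infinite X)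

theorem weDisc_const : ConstMaps (WEDisc X) := constMaps_of_discrete _

theorem weCosmall_const : ConstMaps (WECosmall X) :=
  constMaps_cosmall (WECarrier X) (weBound X) (weBound_infinite X)

theorem weCosmall_compact_finite (s : Set (WECosmall X)) (hs : IsCompact s) : s.Finite :=
  cosmall_compact_finite (WECarrier X) (weBound X) (weBound_infinite X) s hs

/-- The identity map, as a continuous map from the discrete to the co-small copy. -/
def weMap : C(WEDisc X, WECosmall X) :=
  ⟨fun s => s, continuous_of_discreteTopology⟩

theorem weMap_WE : IsWeakHomotopyEquiv (weMap X) :=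
  constMaps_WE (weDisc_const X) (weCosmall_const X) (weMap X)
    Function.bijective_id

end Gadget

/-- If `X` inverts weak homotopy equivalences, then `X` is path-connected. -/
theorem stmt3 (X : Type) [TopologicalSpace X] (h : InvertsWeakEquivs X) :
    ∀ x y : X, Joined x y := by
  classical
  intro x y
  have hbij := h (WEDisc X) (WECosmall X) (weMap X) (weMap_WE X)
  -- the function prescribing path components
  set s₀ : WEDisc X := (∅ : Set (Set X ⊕ ℕ)) with hs₀
  set s₁ : WEDisc X := (Set.univ : Set (Set X ⊕ ℕ)) with hs₁
  have hs01 : s₀ ≠ s₁ := by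
    intro hh
    exact Set.empty_ne_univ hh
  set g : C(WEDisc X, X) := ⟨fun s => if s = s₀ then x else y,
    continuous_of_discreteTopology⟩ with hg
  obtain ⟨kcls, hkcls⟩ := hbij.2 (Quotient.mk _ g)
  obtain ⟨k, rfl⟩ := Quotient.exists_rep kcls
  have hrel : ContinuousMap.Homotopic (k.comp (weMap X)) g := Quotient.exact hkcls
  obtain ⟨H⟩ := hrel
  -- paths from k s to prescribed points
  have hpath : ∀ s : WEDisc X, Joined (k (weMap X s)) (g s) := by
    intro s
    exact ⟨H.evalAt s⟩
  -- find a generic point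
  set E : Set X → Set (WECosmall X) := fun U =>
    if IsOpen U ∧ (⇑k ⁻¹' U).Nonempty then (⇑k ⁻¹' U)ᶜ else ∅ with hE
  have hEsmall : ∀ U, #(E U) ≤ weBound X := by
    intro U
    by_cases hc : IsOpen U ∧ (⇑k ⁻¹' U).Nonempty
    · have hopen : IsOpen (⇑k ⁻¹' U) := hc.1.preimage k.continuous
      rcases hopen with hempty | hsmall
      · exact absurd hempty (Set.nonempty_iff_ne_empty.mp hc.2)
      · rw [hE]; simp only [if_pos hc]; exact hsmall
    · rw [hE]; simp only [if_neg hc, Cardinal.mk_emptyCollection]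
      exact zero_le
  have hBad : #(⋃ U : Set X, E U) < #(WECosmall X) := by
    have h1 : #(⋃ U : Set X, E U) ≤ #(Set X) * ⨆ U : Set X, #(E U) :=
      Cardinal.mk_iUnion_le E
    have h2 : ⨆ U : Set X, #(E U) ≤ weBound X := ciSup_le' hEsmall
    have h3 : #(Set X) ≤ weBound X := by
      rw [weBound]
      exact (Cardinal.mk_sum (Set X) ℕ).symm ▸ by
        simpa using le_self_add (a := #(Set X)) (c := #ℕ)
    have h4 : #(⋃ U : Set X, E U) ≤ weBound X := by
      calc #(⋃ U : Set X, E U) ≤ #(Set X) * ⨆ U : Set X, #(E U) := h1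
        _ ≤ weBound X * weBound X := mul_le_mul' h3 h2
        _ = weBound X := mul_eq_self (weBound_infinite X)
    have h5 : weBound X < #(WECosmall X) := by
      have : #(WECosmall X) = 2 ^ weBound X := by
        rw [weBound]
        exact mk_set
      rw [this]
      exact cantor _
    exact lt_of_le_of_lt h4 h5
  have hnotall : ¬ (⋃ U : Set X, E U) = Set.univ := by
    intro hh
    rw [hh, Cardinal.mk_univ] at hBad
    exact lt_irrefl _ hBad
  obtain ⟨sstar, hsstar⟩ : ∃ s : WECosmall X, s ∉ ⋃ U : Set X, E U := by
    by_contra hh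
    push_neg at hh
    exact hnotall (Set.eq_univ_iff_forall.mpr hh)
  -- k sstar is in every open set that meets the image of k
  have hgen : ∀ U : Set X, IsOpen U → (⇑k ⁻¹' U).Nonempty → k sstar ∈ U := by
    intro U hU hne
    by_contra hnot
    apply hsstar
    refine Set.mem_iUnion.mpr ⟨U, ?_⟩
    rw [hE]
    simp only [if_pos (And.intro hU hne)]
    exact hnot
  -- every point in the image of k is joined to k sstar
  have hjoin : ∀ s : WECosmall X, Joined (k s) (k sstar) := by
    intro s
    apply joined_of_forall_open_mem
    intro U hU hsU
    exact hgen U hU ⟨s, hsU⟩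
  -- combine
  have hx : Joined (k (weMap X s₀)) x := by
    have := hpath s₀
    rw [hg] at this
    simpa using this
  have hy : Joined (k (weMap X s₁)) y := by
    have := hpath s₁
    rw [hg] at this
    have hne : s₁ ≠ s₀ := Ne.symm hs01
    simpa [hne] using this
  exact ((hx.symm.trans (hjoin (weMap X s₀))).trans (hjoin (weMap X s₁)).symm).trans hy
end
end

section
/- Let α be an infinite cardinal with α ≥ 2^{ℵ₀}, B a set with #B > α endowed with the topology whose proper closed sets are exactly the subsets of cardinality ≤ α, and A the same set with the discrete topology. Then the identity map id : A → B is a weak homotopy equivalence. -/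
open ContinuousMap Topology

noncomputable section

section Aux

open Cardinal unitInterval

/-- The unit interval has cardinality at most continuum. -/
lemma aux_mk_I_le : #I ≤ 𝔠 :=
  le_trans (Cardinal.mk_set_le unitInterval) Cardinal.mk_real.le

/-- The cube has cardinality at most continuum. -/
lemma aux_mk_cube_le (n : ℕ) : #(Fin n → I) ≤ 𝔠 := by
  have h1 : #(Fin n → I) = (#I) ^ (n : Cardinal) := by
    rw [Cardinal.mk_arrow, Cardinal.mk_fin]; simp
  rw [h1]
  calc (#I) ^ (n : Cardinal) ≤ 𝔠 ^ (n : Cardinal) :=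
        Cardinal.power_le_power_right aux_mk_I_le
    _ ≤ 𝔠 ^ (ℵ₀ : Cardinal) :=
        Cardinal.power_le_power_left Cardinal.continuum_ne_zero (Cardinal.nat_lt_aleph0 n).le
    _ = 𝔠 := Cardinal.continuum_power_aleph0

lemma aux_mk_prod_le (n : ℕ) : #(I × (Fin n → I)) ≤ 𝔠 := by
  rw [Cardinal.mk_prod]
  simp only [Cardinal.lift_id]
  calc #I * #(Fin n → I) ≤ 𝔠 * 𝔠 :=
        mul_le_mul' aux_mk_I_le (aux_mk_cube_le n)
    _ = 𝔠 := Cardinal.continuum_mul_self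

/-- In a space where every set of cardinality at most continuum is closed, any continuous map
from a preconnected space of cardinality at most continuum is constant. -/
lemma aux_const {X : Type} [TopologicalSpace X]
    (hX : ∀ s : Set X, #s ≤ 𝔠 → IsClosed s)
    {Y : Type} [TopologicalSpace Y] [PreconnectedSpace Y]
    (hY : #Y ≤ 𝔠) (f : C(Y, X)) (y y' : Y) : f y = f y' := by
  have hclosed : IsClosed (f ⁻¹' {f y}) := by
    refine (hX {f y} ?_).preimage f.continuous
    simp only [Cardinal.mk_fintype, Set.card_singleton, Nat.cast_one]
    exact le_trans Cardinal.one_le_aleph0 Cardinal.aleph0_le_continuum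
  have hcompl : (f ⁻¹' {f y})ᶜ = f ⁻¹' (Set.range f \ {f y}) := by
    ext z
    simp [Set.mem_preimage, Set.mem_diff]
  have hopen : IsOpen (f ⁻¹' {f y}) := by
    rw [← isClosed_compl_iff, hcompl]
    exact (hX _ (le_trans
      (le_trans (Cardinal.mk_le_mk_of_subset Set.diff_subset) Cardinal.mk_range_le) hY)).preimage
      f.continuous
  have hclopen : IsClopen (f ⁻¹' {f y}) := ⟨hclosed, hopen⟩
  have huniv : f ⁻¹' {f y} = Set.univ := hclopen.eq_univ ⟨y, rfl⟩
  have : y' ∈ f ⁻¹' {f y} := huniv ▸ Set.mem_univ y'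
  exact this.symm

/-- The main workhorse: if every small set is closed in both spaces and `f` is a bijective
continuous map, it is a weak homotopy equivalence. -/
lemma aux_whe {A B : Type} [tA : TopologicalSpace A] [tB : TopologicalSpace B]
    (hA : ∀ s : Set A, #s ≤ 𝔠 → IsClosed s)
    (hB : ∀ s : Set B, #s ≤ 𝔠 → IsClosed s)
    (f : C(A, B)) (hf : Function.Bijective f) : IsWeakHomotopyEquiv f := by
  constructor
  · constructor
    · intro x y h
      induction x using Quotient.ind
      induction y using Quotient.ind
      rename_i x y
      have h' : (⟦f x⟧ : ZerothHomotopy B) = ⟦f y⟧ := h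
      obtain ⟨p⟩ := Quotient.exact h'
      have hxy : f x = f y := by
        have := aux_const hB aux_mk_I_le p.toContinuousMap 0 1
        simpa using this
      exact Quotient.sound (hf.1 hxy ▸ ⟨Path.refl x⟩)
    · intro y
      induction y using Quotient.ind
      rename_i y
      obtain ⟨x, hx⟩ := hf.2 y
      exact ⟨⟦x⟧, by rw [← hx]; rfl⟩
  · intro n a
    constructor
    · intro p q h
      induction p using Quotient.ind
      induction q using Quotient.ind
      rename_i p q
      obtain ⟨H⟩ := Quotient.exact h
      -- H : HomotopyRel (f.comp p.1) (f.comp q.1) (Cube.boundary (Fin n)) in B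
      have hconst : ∀ z z' : I × (Fin n → I), H.toContinuousMap z = H.toContinuousMap z' :=
        aux_const hB (aux_mk_prod_le n) H.toContinuousMap
      have hpq : ∀ z : Fin n → I, f (p.1 z) = f (q.1 z) := by
        intro z
        have h0 : H.toContinuousMap (0, z) = f (p.1 z) := H.apply_zero z
        have h1 : H.toContinuousMap (1, z) = f (q.1 z) := H.apply_one z
        rw [← h0, ← h1]; exact hconst _ _
      have hpq' : p = q := by
        apply Subtype.ext
        ext z
        exact hf.1 (hpq z)
      rw [hpq']
    · intro q
      induction q using Quotient.ind
      rename_i q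
      -- q : GenLoop (Fin n) B (f a); it is constant with value f a? not necessarily if boundary empty
      -- q.1 is a constant map into B
      have hconstq : ∀ z z' : Fin n → I, q.1 z = q.1 z' :=
        aux_const hB (aux_mk_cube_le n) q.1
      -- pick a point of the cube
      by_cases hn : Nonempty (Fin n → I)
      · obtain ⟨z₀⟩ := hn
        obtain ⟨b, hb⟩ := hf.2 (q.1 z₀)
        -- the constant map at b, as a GenLoop in A
        refine ⟨⟦⟨ContinuousMap.const _ b, ?_⟩⟧, ?_⟩
        · intro y hy
          have : q.1 y = f a := q.2 y hy
          have h2 : q.1 z₀ = f a := (hconstq z₀ y).trans this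
          show b = a
          exact hf.1 (by rw [hb, h2])
        · apply Quotient.sound
          show (f.comp (ContinuousMap.const _ b)).HomotopicRel q.1 (Cube.boundary (Fin n))
          have heq : (f.comp (ContinuousMap.const _ b) : C(Fin n → I, B)) = q.1 := by
            ext z
            simp [hb, hconstq z₀ z]
          rw [heq]
          exact ContinuousMap.HomotopicRel.refl _
      · exact absurd ⟨fun i => 0⟩ hn

end Aux

/-- If `α ≥ 𝔠` is infinite, `#B > α`, `B` carries the topology whose proper closed sets are
the subsets of cardinality `≤ α`, and `A` is the same set with the discrete topology, then
the identity `A → B` is a weak homotopy equivalence. -/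
theorem stmt8 (B : Type) (α : Cardinal) (hα : Cardinal.aleph0 ≤ α)
    (hc : Cardinal.continuum ≤ α) (hB : α < Cardinal.mk B)
    (t : TopologicalSpace B)
    (ht : ∀ F : Set B, IsClosed[t] F ↔ F = Set.univ ∨ Cardinal.mk F ≤ α) :
    @IsWeakHomotopyEquiv B B ⊥ t (@ContinuousMap.mk B B ⊥ t id continuous_bot) := by
  apply @aux_whe B B ⊥ t ?_ ?_ _ Function.bijective_id
  · intro s _
    exact @isClosed_discrete B ⊥ (discreteTopology_bot B) s
  · intro s hs
    exact (ht s).mpr (Or.inr (le_trans hs hc))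
end
end

section
/- Let X be a topological space, α = max(#X, 2^{ℵ₀}), and B a set with #B > α endowed with the topology whose proper closed sets are the subsets of cardinality ≤ α. Let h : B → X be continuous. Then there exists x ∈ X such that x belongs to every open neighborhood of h(b) for every b ∈ B; in particular, h(b) lies in the same path component as x for all b. -/
open ContinuousMap Topology

noncomputable section

/-- Let `α = max (#X) 𝔠`, let `B` have cardinality `> α` with the topology whose proper
closed sets are the subsets of cardinality `≤ α`, and let `h : B → X` be continuous. Then
there is `x ∈ X` belonging to every open neighbourhood of every `h b`; in particular each
`h b` lies in the same path component as `x`. -/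
theorem stmt9 (X B : Type) [TopologicalSpace X] (α : Cardinal)
    (hα : α = max (Cardinal.mk X) Cardinal.continuum) (hB : α < Cardinal.mk B)
    (t : TopologicalSpace B)
    (ht : ∀ F : Set B, IsClosed[t] F ↔ F = Set.univ ∨ Cardinal.mk F ≤ α)
    (h : @ContinuousMap B X t _) :
    ∃ x : X, (∀ (b : B) (U : Set X), IsOpen U → h b ∈ U → x ∈ U) ∧
      ∀ b : B, Joined x (h b) := by
  letI := t
  have hαinf : Cardinal.aleph0 ≤ α := by
    rw [hα]; exact Cardinal.aleph0_le_continuum.trans (le_max_right _ _)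
  have hXα : Cardinal.mk X ≤ α := by rw [hα]; exact le_max_left _ _
  obtain ⟨x, hx⟩ : ∃ x : X, α < Cardinal.mk (h ⁻¹' {x} : Set B) := by
    by_contra hc
    push_neg at hc
    have h1 : Cardinal.mk B = Cardinal.sum fun x : X => Cardinal.mk (h ⁻¹' {x} : Set B) := by
      rw [← Cardinal.mk_sigma]
      exact (Cardinal.mk_congr (Equiv.sigmaFiberEquiv h)).symm
    have h2 : Cardinal.mk B ≤ Cardinal.mk X * α := by
      rw [h1, ← Cardinal.sum_const']
      exact Cardinal.sum_le_sum _ _ fun x => hc x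
    have h3 : Cardinal.mk X * α ≤ α := by
      calc Cardinal.mk X * α ≤ α * α := mul_le_mul_left hXα α
      _ = α := Cardinal.mul_eq_self hαinf
    exact absurd (h2.trans h3) (not_le.mpr hB)
  refine ⟨x, ?_, ?_⟩
  · intro b U hU hbU
    by_contra hxU
    have hsub : (h ⁻¹' {x} : Set B) ⊆ h ⁻¹' Uᶜ := by
      intro y hy
      simp only [Set.mem_preimage, Set.mem_singleton_iff] at hy
      simp [Set.mem_preimage, hy, hxU]
    have hcl : IsClosed (h ⁻¹' Uᶜ : Set B) := (hU.isClosed_compl).preimage h.continuous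
    rcases (ht _).mp hcl with huniv | hcard
    · have : b ∈ h ⁻¹' Uᶜ := huniv ▸ Set.mem_univ b
      exact this hbU
    · exact absurd ((Cardinal.mk_le_mk_of_subset hsub).trans hcard) (not_le.mpr hx)
  · intro b
    have hspec : x ⤳ h b := by
      rw [specializes_iff_forall_open]
      intro s hs hbs
      by_contra hxs
      have hsub : (h ⁻¹' {x} : Set B) ⊆ h ⁻¹' sᶜ := by
        intro y hy
        simp only [Set.mem_preimage, Set.mem_singleton_iff] at hy
        simp [Set.mem_preimage, hy, hxs]
      have hcl : IsClosed (h ⁻¹' sᶜ : Set B) := (hs.isClosed_compl).preimage h.continuous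
      rcases (ht _).mp hcl with huniv | hcard
      · exact (huniv ▸ Set.mem_univ b : b ∈ h ⁻¹' sᶜ) hbs
      · exact absurd ((Cardinal.mk_le_mk_of_subset hsub).trans hcard) (not_le.mpr hx)
    exact joinedIn_univ.mp (hspec.joinedIn (Set.mem_univ _) (Set.mem_univ _))
end
end

section
/- Let (X, x₀) be a pointed space such that for every weak homotopy equivalence f : A → B between Hausdorff spaces and every a₀ ∈ A, the induced map f* : [(B, f(a₀)), (X, x₀)] → [(A, a₀), (X, x₀)] on pointed homotopy classes is a bijection. Then X is path-connected. -/
open ContinuousMap Topology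

noncomputable section

/-- Pointed continuous maps `(A, a₀) → (X, x₀)`. -/
def PtdMap (A X : Type*) [TopologicalSpace A] [TopologicalSpace X] (a₀ : A) (x₀ : X) :=
  {f : C(A, X) // f a₀ = x₀}

/-- The setoid of pointed homotopy (homotopy rel the basepoint). -/
def ptdHomotopySetoid (A X : Type*) [TopologicalSpace A] [TopologicalSpace X]
    (a₀ : A) (x₀ : X) : Setoid (PtdMap A X a₀ x₀) :=
  ⟨fun f g => f.1.HomotopicRel g.1 {a₀},
   ⟨fun f => ContinuousMap.HomotopicRel.refl f.1,
    fun h => h.symm, fun h h' => h.trans h'⟩⟩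

/-- `[(A, a₀), (X, x₀)]`: pointed homotopy classes of pointed maps. -/
def PtdHtpyClasses (A X : Type*) [TopologicalSpace A] [TopologicalSpace X]
    (a₀ : A) (x₀ : X) : Type _ :=
  Quotient (ptdHomotopySetoid A X a₀ x₀)

/-- Precomposition `f^* : [(B, f a₀), (X, x₀)] → [(A, a₀), (X, x₀)]`. -/
def ptdPrecomp {A B X : Type*} [TopologicalSpace A] [TopologicalSpace B] [TopologicalSpace X]
    (f : C(A, B)) (a₀ : A) (x₀ : X) :
    PtdHtpyClasses B X (f a₀) x₀ → PtdHtpyClasses A X a₀ x₀ :=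
  Quotient.map (fun g => ⟨g.1.comp f, by simp [g.2]⟩)
    (fun g₀ g₁ h => h.map (fun H =>
      { toHomotopy := H.toHomotopy.compContinuousMap f
        prop' := fun t a ha => by
          rw [Set.mem_singleton_iff] at ha
          subst ha
          exact H.eq_fst t rfl }))

open ContinuousMap Topology Filter Set unitInterval

noncomputable section

/-- In a totally disconnected space, joined points are equal. -/
lemma joined_eq {Y : Type*} [TopologicalSpace Y] [TotallyDisconnectedSpace Y] {y z : Y}
    (h : Joined y z) : y = z := by
  obtain ⟨p⟩ := h
  have h1 := (isPreconnected_range p.continuous).subsingleton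
    (Set.mem_range_self 0) (Set.mem_range_self 1)
  simpa using h1

/-- Track of a homotopy as a path. -/
def Homotopy.track {Z Y : Type*} [TopologicalSpace Z] [TopologicalSpace Y]
    {u v : C(Z, Y)} (F : u.Homotopy v) (z : Z) : Path (u z) (v z) where
  toFun t := F (t, z)
  continuous_toFun := F.continuous.comp (continuous_id.prodMk continuous_const)
  source' := F.apply_zero z
  target' := F.apply_one z

lemma homotopicRel_eq {Z Y : Type*} [TopologicalSpace Z] [TopologicalSpace Y]
    [TotallyDisconnectedSpace Y] {u v : C(Z, Y)} {S : Set Z}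
    (h : u.HomotopicRel v S) : u = v := by
  obtain ⟨F⟩ := h
  ext z
  exact joined_eq ⟨Homotopy.track F.toHomotopy z⟩

/-- continuity of maps out of `I × A` with `A` discrete. -/
lemma continuous_of_discrete_tracks {A X : Type*} [TopologicalSpace A] [DiscreteTopology A]
    [TopologicalSpace X] (F : I × A → X) (h : ∀ a, Continuous fun t => F (t, a)) :
    Continuous F := by
  rw [continuous_iff_continuousAt]
  rintro ⟨t, a⟩
  have hn : 𝓝 ((t, a) : I × A) = (𝓝 t) ×ˢ pure a := by
    rw [nhds_prod_eq, nhds_discrete A]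
  unfold ContinuousAt
  rw [hn]
  have hev : (fun p : I × A => F (p.1, a)) =ᶠ[(𝓝 t) ×ˢ pure a] F := by
    filter_upwards [Filter.prod_mem_prod (Filter.univ_mem) (Filter.mem_pure.mpr rfl :
      {a} ∈ (pure a : Filter A))] with p hp
    rcases p with ⟨s, b⟩
    obtain ⟨-, hb⟩ := hp
    simp only [Set.mem_singleton_iff] at hb
    subst hb
    rfl
  refine Filter.Tendsto.congr' hev ?_
  exact ((h a).tendsto t).comp (Filter.tendsto_fst)

namespace Stmt12Aux

open OnePoint

/-- The test map: discrete `ℕ ⊕ Unit` to the one-point compactification of `ℕ`. -/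
def φfun : ℕ ⊕ Unit → OnePoint ℕ := Sum.elim (fun n => (n : OnePoint ℕ)) (fun _ => ∞)

def φequiv : (ℕ ⊕ Unit) ≃ OnePoint ℕ where
  toFun := φfun
  invFun o := o.elim (Sum.inr ()) Sum.inl
  left_inv a := by rcases a with a | ⟨⟩ <;> rfl
  right_inv o := by cases o <;> rfl

def φ : C(ℕ ⊕ Unit, OnePoint ℕ) := ⟨φfun, continuous_of_discreteTopology⟩

lemma constant_of_preconnected {Z Y : Type*} [TopologicalSpace Z] [TopologicalSpace Y]
    [PreconnectedSpace Z] [TotallyDisconnectedSpace Y] (u : C(Z, Y)) (z z' : Z) :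
    u z = u z' :=
  (isPreconnected_range u.continuous).subsingleton
    (Set.mem_range_self z) (Set.mem_range_self z')

/-- `φ` is a weak homotopy equivalence. -/
lemma φ_weq : IsWeakHomotopyEquiv φ := by
  constructor
  · constructor
    · intro u v huv
      induction u using Quotient.inductionOn with | _ a =>
      induction v using Quotient.inductionOn with | _ b =>
      unfold zerothMap at huv
      erw [Quotient.map_mk, Quotient.map_mk] at huv
      have h2 : Joined (φ a) (φ b) := Quotient.exact huv
      have : φ a = φ b := joined_eq h2
      exact congrArg _ (φequiv.injective this)
    · intro v
      induction v using Quotient.inductionOn with | _ b =>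
      refine ⟨Quotient.mk _ (φequiv.symm b), ?_⟩
      unfold zerothMap
      erw [Quotient.map_mk]
      have : φ (φequiv.symm b) = b := φequiv.apply_symm_apply b
      rw [show (φ (φequiv.symm b) : OnePoint ℕ) = b from this]
  · intro n a
    haveI : PreconnectedSpace (Fin n → unitInterval) := inferInstance
    constructor
    · intro u v huv
      induction u using Quotient.inductionOn with | _ p =>
      induction v using Quotient.inductionOn with | _ q =>
      unfold _root_.piMap at huv
      erw [Quotient.map_mk, Quotient.map_mk] at huv
      have h2 : GenLoop.Homotopic
          ⟨φ.comp p.1, fun y hy => by rw [ContinuousMap.comp_apply, p.2 y hy]⟩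
          ⟨φ.comp q.1, fun y hy => by rw [ContinuousMap.comp_apply, q.2 y hy]⟩ :=
        Quotient.exact huv
      have h3 : φ.comp p.1 = φ.comp q.1 := homotopicRel_eq h2
      have h4 : p = q := by
        apply Subtype.ext
        ext z
        exact φequiv.injective (ContinuousMap.congr_fun h3 z)
      rw [h4]
    · intro v
      induction v using Quotient.inductionOn with | _ q =>
      -- q is constant
      have hconst : ∀ z z', q.1 z = q.1 z' := fun z z' => constant_of_preconnected q.1 z z'
      set b := q.1 (fun _ => 0) with hb
      by_cases hbd : (Cube.boundary (Fin n)).Nonempty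
      · obtain ⟨y, hy⟩ := hbd
        have hba : b = φ a := by rw [hb, hconst _ y, q.2 y hy]
        refine ⟨Quotient.mk _ ⟨ContinuousMap.const _ a, fun _ _ => rfl⟩, ?_⟩
        unfold _root_.piMap
        erw [Quotient.map_mk]
        congr 1
        apply Subtype.ext
        ext z
        show φ a = q.1 z
        exact hba.symm.trans (hb.trans (hconst _ z))
      · refine ⟨Quotient.mk _ ⟨ContinuousMap.const _ (φequiv.symm b),
          fun y hy => absurd ⟨y, hy⟩ hbd⟩, ?_⟩
        unfold _root_.piMap
        erw [Quotient.map_mk]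
        congr 1
        apply Subtype.ext
        ext z
        show φ (φequiv.symm b) = q.1 z
        have h5 : φ (φequiv.symm b) = b := φequiv.apply_symm_apply b
        exact h5.trans (hb.trans (hconst _ z))

end Stmt12Aux

namespace Stmt12Aux
open OnePoint Filter Set

section Main

variable {X : Type} [TopologicalSpace X]

/-- The successor shift on `OnePoint ℕ`. -/
def shift : C(OnePoint ℕ, OnePoint ℕ) where
  toFun := OnePoint.map Nat.succ
  continuous_toFun := by
    rw [OnePoint.continuous_iff_from_discrete]
    have h1 : Filter.Tendsto (fun n : ℕ => (n : OnePoint ℕ)) cofinite (𝓝 (∞ : OnePoint ℕ)) := by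
      have := OnePoint.tendsto_coe_infty (X := ℕ)
      rwa [Filter.coclosedCompact_eq_cocompact, cocompact_eq_cofinite] at this
    exact h1.comp Nat.succ_injective.tendsto_cofinite

lemma main_joined (x₀ : X)
    (bij : Function.Bijective (ptdPrecomp (X := X) φ (Sum.inr ()) x₀)) (x : X) :
    Joined x x₀ := by
  classical
  -- Step 1: surjectivity gives `g`
  let h : PtdMap (ℕ ⊕ Unit) X (Sum.inr ()) x₀ :=
    ⟨⟨Sum.elim (fun _ => x) (fun _ => x₀), continuous_of_discreteTopology⟩, rfl⟩
  obtain ⟨gc, hgc⟩ := bij.2 (Quotient.mk _ h)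
  obtain ⟨g, rfl⟩ := Quotient.exists_rep gc
  unfold ptdPrecomp at hgc
  erw [Quotient.map_mk] at hgc
  have K0 : (g.1.comp φ).HomotopicRel h.1 {Sum.inr ()} := Quotient.exact hgc
  obtain ⟨K⟩ := K0
  set y : ℕ → X := fun n => g.1 ((n : OnePoint ℕ)) with hy
  have hginf : g.1 ∞ = x₀ := g.2
  -- paths from y n to x
  let p : ∀ n : ℕ, Path (y n) x := fun n => Homotopy.track K.toHomotopy (Sum.inl n)
  -- Step 2: the shifted map
  let g₀ : PtdMap (OnePoint ℕ) X ∞ x₀ := ⟨g.1.comp shift, g.2⟩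
  let q : ∀ n : ℕ, Path (y n) (y (n + 1)) := fun n => (p n).trans (p (n + 1)).symm
  let Kh : (g.1.comp φ).HomotopyRel (g₀.1.comp φ) {Sum.inr ()} :=
    { toFun := fun tc => Sum.elim (fun n => q n tc.1) (fun _ => x₀) tc.2
      continuous_toFun := by
        apply continuous_of_discrete_tracks
          (F := fun tc : unitInterval × (ℕ ⊕ Unit) =>
            Sum.elim (fun n => q n tc.1) (fun _ => x₀) tc.2)
        rintro (n | ⟨⟩)
        · exact (q n).continuous
        · exact continuous_const
      map_zero_left := by
        rintro (n | ⟨⟩)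
        · exact (q n).source
        · exact hginf.symm
      map_one_left := by
        rintro (n | ⟨⟩)
        · exact (q n).target
        · exact hginf.symm
      prop' := by
        rintro t a ha
        rw [Set.mem_singleton_iff] at ha
        subst ha
        exact hginf.symm }
  have hcomp : ptdPrecomp (X := X) φ (Sum.inr ()) x₀ (Quotient.mk _ g) =
      ptdPrecomp (X := X) φ (Sum.inr ()) x₀ (Quotient.mk _ g₀) := by
    unfold ptdPrecomp
    erw [Quotient.map_mk, Quotient.map_mk]
    exact Quotient.sound ⟨Kh⟩
  have hgg := bij.1 hcomp
  have G0 : g.1.HomotopicRel g₀.1 {∞} := Quotient.exact hgg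
  obtain ⟨G⟩ := G0
  -- facts about G
  have Gzero : ∀ b, G (0, b) = g.1 b := fun b => G.apply_zero b
  have Gone : ∀ b, G (1, b) = g₀.1 b := fun b => G.apply_one b
  have Ginf : ∀ t, G (t, (∞ : OnePoint ℕ)) = x₀ := fun t =>
    (G.eq_fst t (Set.mem_singleton _)).trans hginf
  -- the models
  set M : ℕ → ℝ → X := fun n s =>
    G (Set.projIcc (0:ℝ) 1 zero_le_one (s - n), ((n : ℕ) : OnePoint ℕ)) with hM
  set R : ℝ → X := fun s =>
    G (Set.projIcc (0:ℝ) 1 zero_le_one (s - ⌊s⌋₊), ((⌊s⌋₊ : ℕ) : OnePoint ℕ)) with hR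
  have Mcont : ∀ n, Continuous (M n) := by
    intro n
    apply G.continuous.comp
    exact ((continuous_projIcc.comp (continuous_id.sub continuous_const)).prodMk
      continuous_const)
  -- endpoint values
  have hRend : ∀ n : ℕ, R ((n : ℝ) + 1) = y (n + 1) := by
    intro n
    have hfl : ⌊(n : ℝ) + 1⌋₊ = n + 1 := by
      rw [show ((n : ℝ) + 1) = ((n + 1 : ℕ) : ℝ) by push_cast; ring, Nat.floor_natCast]
    rw [hR]
    simp only [hfl]
    have harg : ((n : ℝ) + 1) - ((n + 1 : ℕ) : ℝ) = 0 := by push_cast; ring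
    rw [harg]
    have hproj : Set.projIcc (0:ℝ) 1 zero_le_one 0 = 0 := by
      apply Subtype.ext
      simp [Set.projIcc]
    rw [hproj, Gzero]
  have hMend : ∀ n : ℕ, M n ((n : ℝ) + 1) = y (n + 1) := by
    intro n
    rw [hM]
    have harg : ((n : ℝ) + 1) - (n : ℝ) = 1 := by ring
    simp only [harg]
    have hproj : Set.projIcc (0:ℝ) 1 zero_le_one 1 = 1 := by
      apply Subtype.ext
      simp [Set.projIcc]
    rw [hproj, Gone]
    rfl
  -- E2
  have E2 : ∀ n : ℕ, ∀ s ∈ Set.Icc (n : ℝ) ((n : ℝ) + 1), R s = M n s := by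
    intro n s hs
    rcases eq_or_lt_of_le hs.2 with heq | hlt
    · rw [heq, hRend n, hMend n]
    · have hfl : ⌊s⌋₊ = n := by
        rw [Nat.floor_eq_iff (le_trans (Nat.cast_nonneg n) hs.1)]
        exact ⟨hs.1, hlt⟩
      rw [hR, hM]
      simp only [hfl]
  have Rcont : Continuous R := by
    rw [continuous_iff_continuousAt]
    intro s
    rcases lt_or_ge s 1 with h1 | h1
    · have hev : (M 0) =ᶠ[𝓝 s] R := by
        filter_upwards [Iio_mem_nhds h1] with t ht
        have hfl : ⌊t⌋₊ = 0 := Nat.floor_eq_zero.mpr ht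
        rw [hR, hM]
        simp only [hfl, Nat.cast_zero]
      exact (Mcont 0).continuousAt.congr hev
    · set n := ⌊s⌋₊ with hn
      have hn1 : 1 ≤ n := Nat.le_floor (by exact_mod_cast h1)
      have hns : (n : ℝ) ≤ s := Nat.floor_le (le_trans zero_le_one h1)
      have hsn1 : s < (n : ℝ) + 1 := Nat.lt_floor_add_one s
      have cw2 : ContinuousWithinAt R (Set.Icc (n : ℝ) ((n : ℝ) + 1)) s :=
        (Mcont n).continuousWithinAt.congr (fun t ht => E2 n t ht) (E2 n s ⟨hns, hsn1.le⟩)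
      have cw1 : ContinuousWithinAt R (Set.Iic (n : ℝ)) s := by
        rcases eq_or_lt_of_le hns with heq | hlt
        · -- s = n, approach from the left uses M (n-1)
          set m := n - 1 with hm
          have hmn : (m : ℝ) = (n : ℝ) - 1 := by
            rw [hm]
            push_cast [Nat.cast_sub hn1]
            ring
          have hml : (m : ℝ) < s := by rw [hmn]; linarith
          apply ContinuousWithinAt.congr_of_eventuallyEq
            ((Mcont m).continuousWithinAt)
          · filter_upwards [mem_nhdsWithin_of_mem_nhds (Ioi_mem_nhds hml),
              self_mem_nhdsWithin] with t ht1 ht2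
            apply E2 m t
            constructor
            · exact le_of_lt ht1
            · rw [hmn]
              have : t ≤ (n : ℝ) := ht2
              linarith
          · apply E2 m s
            constructor
            · exact hml.le
            · rw [hmn]; linarith
        · exact continuousWithinAt_of_notMem_closure (by
            rw [isClosed_Iic.closure_eq]
            exact not_le.mpr hlt)
      have := cw1.union cw2
      rw [Set.Iic_union_Icc_eq_Iic (by linarith : (n : ℝ) ≤ (n : ℝ) + 1)] at this
      exact this.continuousAt (Iic_mem_nhds hsn1)
  -- value at 0
  have hR0 : R 0 = y 0 := by
    rw [hR]
    simp only [Nat.floor_zero, Nat.cast_zero, sub_zero]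
    have hproj : Set.projIcc (0:ℝ) 1 zero_le_one 0 = 0 := by
      apply Subtype.ext
      simp [Set.projIcc]
    rw [hproj, Gzero]
  -- the concatenated path
  set c : unitInterval → X := fun t =>
    (if ht : (t : ℝ) < 1 then R ((t : ℝ) / (1 - (t : ℝ))) else x₀) with hc
  have ccont : Continuous c := by
    rw [continuous_iff_continuousAt]
    intro t₀
    by_cases h : (t₀ : ℝ) < 1
    · have hopen : IsOpen {t : unitInterval | (t : ℝ) < 1} :=
        isOpen_Iio.preimage continuous_subtype_val
      have hCA : ContinuousAt (fun t : unitInterval => R ((t : ℝ) / (1 - (t : ℝ)))) t₀ := by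
        apply Rcont.continuousAt.comp
        apply ContinuousAt.div
        · exact continuous_subtype_val.continuousAt
        · exact (continuous_const.sub continuous_subtype_val).continuousAt
        · exact sub_ne_zero.mpr (ne_of_gt h)
      apply hCA.congr
      filter_upwards [hopen.mem_nhds h] with t ht
      simp only [hc]
      rw [dif_pos ht]
    · have ht1 : (t₀ : ℝ) = 1 := le_antisymm t₀.2.2 (not_lt.mp h)
      have hct : c t₀ = x₀ := by simp only [hc]; rw [dif_neg h]
      unfold ContinuousAt
      rw [hct]
      refine ((nhds_basis_opens x₀).tendsto_right_iff).mpr ?_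
      rintro U ⟨hxU, hUopen⟩
      -- tube lemma
      obtain ⟨V, W, hVo, hWo, hVuniv, hWs, hVW⟩ :=
        generalized_tube_lemma isCompact_univ isCompact_singleton
          (hUopen.preimage G.continuous) (by
            rintro ⟨τ, b⟩ ⟨-, hb⟩
            rw [Set.mem_singleton_iff] at hb
            subst hb
            show G (τ, (∞ : OnePoint ℕ)) ∈ U
            rw [Ginf]
            exact hxU)
      have hWinf : (∞ : OnePoint ℕ) ∈ W := hWs rfl
      -- cofinitely many naturals are in W
      have hWnh : W ∈ 𝓝 (∞ : OnePoint ℕ) := hWo.mem_nhds hWinf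
      have hcof : {n : ℕ | (n : OnePoint ℕ) ∈ W} ∈ (cofinite : Filter ℕ) := by
        have h2 : Filter.Tendsto (fun n : ℕ => (n : OnePoint ℕ)) cofinite
            (𝓝 (∞ : OnePoint ℕ)) := by
          have := OnePoint.tendsto_coe_infty (X := ℕ)
          rwa [Filter.coclosedCompact_eq_cocompact, cocompact_eq_cofinite] at this
        exact h2 hWnh
      obtain ⟨N, hN⟩ : ∃ N : ℕ, ∀ n, N ≤ n → (n : OnePoint ℕ) ∈ W := by
        rw [Filter.mem_cofinite] at hcof
        rcases Set.Finite.bddAbove hcof with ⟨N, hNb⟩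
        refine ⟨N + 1, fun n hn => ?_⟩
        by_contra hc
        have := hNb (Set.mem_setOf.mpr hc)
        omega
      -- eventually t is close to 1
      have hNlt : ((N : ℝ) / ((N : ℝ) + 1)) < 1 := by
        rw [div_lt_one (by positivity)]
        linarith
      have hev : ∀ᶠ t : unitInterval in 𝓝 t₀, ((N : ℝ) / ((N : ℝ) + 1)) < (t : ℝ) := by
        have hco : Filter.Tendsto (fun t : unitInterval => (t : ℝ)) (𝓝 t₀) (𝓝 1) := by
          rw [← ht1]
          exact continuous_subtype_val.continuousAt
        exact hco.eventually_const_lt hNlt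
      filter_upwards [hev] with t ht
      by_cases htl : (t : ℝ) < 1
      · show c t ∈ U
        have hceq : c t = R ((t : ℝ) / (1 - (t : ℝ))) := by simp only [hc]; rw [dif_pos htl]
        rw [hceq]
        set s := (t : ℝ) / (1 - (t : ℝ)) with hs
        have htpos : (0:ℝ) < 1 - (t : ℝ) := by linarith
        have hsN : (N : ℝ) ≤ s := by
          rw [hs, le_div_iff₀ htpos]
          rw [div_lt_iff₀ (by positivity : (0:ℝ) < (N:ℝ) + 1)] at ht
          nlinarith
        have hfl : N ≤ ⌊s⌋₊ := Nat.le_floor hsN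
        rw [hR]
        exact hVW ⟨hVuniv (Set.mem_univ _), hN _ hfl⟩
      · show c t ∈ U
        have hceq : c t = x₀ := by simp only [hc]; rw [dif_neg htl]
        rw [hceq]
        exact hxU
  -- assemble the path
  let cPath : Path (y 0) x₀ :=
    { toFun := c
      continuous_toFun := ccont
      source' := by
        show c 0 = y 0
        have hceq : c 0 = R (((0:unitInterval) : ℝ) / (1 - ((0:unitInterval) : ℝ))) := by
          simp only [hc]
          rw [dif_pos (by norm_num)]
        rw [hceq]
        norm_num
        exact hR0
      target' := by
        show c 1 = x₀
        simp only [hc]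
        rw [dif_neg (by norm_num)] }
  exact ⟨(p 0).symm.trans cPath⟩

end Main

end Stmt12Aux


/-- If `(X, x₀)` is a pointed space such that every weak homotopy equivalence between
Hausdorff spaces induces a bijection on pointed homotopy classes of maps into `(X, x₀)`,
then `X` is path-connected. -/
theorem stmt12 (X : Type) [TopologicalSpace X] (x₀ : X)
    (H : ∀ (A B : Type) [TopologicalSpace A] [TopologicalSpace B] [T2Space A] [T2Space B]
      (f : C(A, B)), IsWeakHomotopyEquiv f → ∀ a₀ : A,
        Function.Bijective (ptdPrecomp (X := X) f a₀ x₀)) :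
    PathConnectedSpace X := by
  have bij := H (ℕ ⊕ Unit) (OnePoint ℕ) Stmt12Aux.φ Stmt12Aux.φ_weq (Sum.inr ())
  have main := Stmt12Aux.main_joined x₀ bij
  exact ⟨⟨x₀⟩, fun u v => (main u).trans (main v).symm⟩
end
end
end

section
/- Let F : B × [0,1] → X be a homotopy, where B = {0} ∪ {1/n : n ≥ 1} ⊆ ℝ, with F(0,t) = x₀ for all t. Define γ : [0,1] → X by γ(0) = x₀ and γ(t) = F(1/n, (1/n − 1/(n+1))⁻¹ (t − 1/(n+1))) for t ∈ [1/(n+1), 1/n]. Then γ is a continuous path from x₀ to F(1,1), provided F(1/n, 1) = F(1/(n−1), 0) for all n ≥ 2 (so the pieces glue). -/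
open ContinuousMap Topology

noncomputable section

/-- The subspace `{0} ∪ {1/n : n ≥ 1}` of `ℝ`. -/
def Bset : Set ℝ := {x | x = 0 ∨ ∃ n : ℕ, 1 ≤ n ∧ x = 1 / n}

namespace Stmt15Aux

lemma bmem (n : ℕ) : (1:ℝ)/(n:ℝ) ∈ Bset := by
  rcases Nat.eq_zero_or_pos n with h | h
  · left; simp [h]
  · exact Or.inr ⟨n, h, rfl⟩

noncomputable def b (n : ℕ) : Bset := ⟨1/(n:ℝ), bmem n⟩

def sval (n : ℕ) (t : ℝ) : ℝ :=
  (1/(n:ℝ) - 1/((n:ℝ)+1))⁻¹ * (t - 1/((n:ℝ)+1))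

noncomputable def sc (n : ℕ) (t : ℝ) : unitInterval :=
  ⟨max 0 (min 1 (sval n t)), le_max_left _ _, max_le zero_le_one (min_le_left _ _)⟩

lemma sc_cont (n : ℕ) : Continuous fun t : ℝ => sc n t := by
  apply Continuous.subtype_mk
  unfold sval
  fun_prop

lemma hd_pos {n : ℕ} (hn : 1 ≤ n) : (0:ℝ) < 1/(n:ℝ) - 1/((n:ℝ)+1) := by
  have hn' : (0:ℝ) < n := by exact_mod_cast hn
  rw [sub_pos]
  exact one_div_lt_one_div_of_lt hn' (by linarith)

lemma sval_nonneg {n : ℕ} (hn : 1 ≤ n) {t : ℝ} (h1 : 1/((n:ℝ)+1) ≤ t) : 0 ≤ sval n t :=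
  mul_nonneg (inv_nonneg.mpr (hd_pos hn).le) (by linarith)

lemma sval_le_one {n : ℕ} (hn : 1 ≤ n) {t : ℝ} (h2 : t ≤ 1/(n:ℝ)) : sval n t ≤ 1 := by
  have hd := hd_pos hn
  show (1/(n:ℝ) - 1/((n:ℝ)+1))⁻¹ * (t - 1/((n:ℝ)+1)) ≤ 1
  calc (1/(n:ℝ) - 1/((n:ℝ)+1))⁻¹ * (t - 1/((n:ℝ)+1))
      ≤ (1/(n:ℝ) - 1/((n:ℝ)+1))⁻¹ * (1/(n:ℝ) - 1/((n:ℝ)+1)) :=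
        mul_le_mul_of_nonneg_left (by linarith) (inv_nonneg.mpr hd.le)
    _ = 1 := inv_mul_cancel₀ hd.ne'

lemma sc_coe {n : ℕ} (hn : 1 ≤ n) {t : ℝ} (h1 : 1/((n:ℝ)+1) ≤ t) (h2 : t ≤ 1/(n:ℝ)) :
    (sc n t : ℝ) = sval n t := by
  show max 0 (min 1 (sval n t)) = sval n t
  rw [min_eq_right (sval_le_one hn h2), max_eq_right (sval_nonneg hn h1)]

lemma sc_left (n : ℕ) : sc n (1/((n:ℝ)+1)) = 0 := by
  apply Subtype.ext
  show max 0 (min 1 (sval n (1/((n:ℝ)+1)))) = 0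
  have : sval n (1/((n:ℝ)+1)) = 0 := by simp [sval]
  rw [this]
  simp

lemma sc_right {n : ℕ} (hn : 1 ≤ n) : sc n (1/(n:ℝ)) = 1 := by
  have hd := hd_pos hn
  apply Subtype.ext
  show max 0 (min 1 (sval n (1/(n:ℝ)))) = 1
  have : sval n (1/(n:ℝ)) = 1 := inv_mul_cancel₀ hd.ne'
  rw [this]
  simp

lemma floor_eq {n : ℕ} (hn : 1 ≤ n) {t : ℝ} (h1 : 1/((n:ℝ)+1) < t) (h2 : t ≤ 1/(n:ℝ)) :
    ⌊1/t⌋₊ = n := by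
  have hn' : (0:ℝ) < n := by exact_mod_cast hn
  have ht : 0 < t := lt_trans (by positivity) h1
  rw [Nat.floor_eq_iff (by positivity)]
  constructor
  · have := one_div_le_one_div_of_le ht h2
    rwa [one_div_one_div] at this
  · have := one_div_lt_one_div_of_lt (by positivity : (0:ℝ) < 1/((n:ℝ)+1)) h1
    rwa [one_div_one_div] at this

lemma floor_bounds {t : ℝ} (h0 : 0 < t) (h1 : t ≤ 1) :
    1 ≤ ⌊1/t⌋₊ ∧ 1/((⌊1/t⌋₊:ℝ)+1) < t ∧ t ≤ 1/(⌊1/t⌋₊:ℝ) := by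
  have h1t : (1:ℝ) ≤ 1/t := by rw [le_div_iff₀ h0]; linarith
  have hfl : 1 ≤ ⌊1/t⌋₊ := Nat.le_floor (by exact_mod_cast h1t)
  have hle : (⌊1/t⌋₊:ℝ) ≤ 1/t := Nat.floor_le (by positivity)
  have hlt : 1/t < (⌊1/t⌋₊:ℝ) + 1 := Nat.lt_floor_add_one _
  have hflpos : (0:ℝ) < (⌊1/t⌋₊:ℝ) := by exact_mod_cast hfl
  refine ⟨hfl, ?_, ?_⟩
  · rw [div_lt_iff₀ (by positivity)]
    rw [div_lt_iff₀ h0] at hlt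
    nlinarith
  · rw [le_div_iff₀ hflpos]
    rw [le_div_iff₀ h0] at hle
    nlinarith

variable {X : Type} [TopologicalSpace X] (x₀ : X) (F : C(Bset × unitInterval, X))

/-- The glued path. -/
noncomputable def gam (t : unitInterval) : X :=
  if (t:ℝ) = 0 then x₀ else F (b ⌊1/(t:ℝ)⌋₊, sc ⌊1/(t:ℝ)⌋₊ (t:ℝ))

lemma g_cont (n : ℕ) : Continuous fun t : unitInterval => F (b n, sc n (t:ℝ)) :=
  F.continuous.comp (continuous_const.prodMk ((sc_cont n).comp continuous_subtype_val))

variable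
    (hglue : ∀ (n : ℕ) (hn : 2 ≤ n),
      F (⟨1 / n, Or.inr ⟨n, Nat.one_le_of_lt hn, rfl⟩⟩, 1) =
        F (⟨1 / ((n : ℝ) - 1),
            Or.inr ⟨n - 1, Nat.le_sub_one_of_lt hn,
              by rw [Nat.cast_sub (Nat.one_le_of_lt hn), Nat.cast_one]⟩⟩,
          0))

include hglue in
lemma glue' (m : ℕ) (hm : 1 ≤ m) : F (b (m+1), 1) = F (b m, 0) := by
  have h := hglue (m+1) (by omega)
  refine h.trans (congrArg (fun p : Bset => F (p, 0)) (Subtype.ext ?_))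
  show 1 / ((((m+1:ℕ)):ℝ) - 1) = 1/(m:ℝ)
  push_cast
  ring

variable
    (hF0 : ∀ t : unitInterval, F (⟨0, Or.inl rfl⟩, t) = x₀)

include hglue in
lemma gam_spec (n : ℕ) (hn : 1 ≤ n) (t : unitInterval)
    (h1 : 1/((n:ℝ)+1) ≤ (t:ℝ)) (h2 : (t:ℝ) ≤ 1/(n:ℝ)) :
    gam x₀ F t = F (b n, sc n (t:ℝ)) := by
  have hn' : (0:ℝ) < n := by exact_mod_cast hn
  have htpos : 0 < (t:ℝ) := lt_of_lt_of_le (by positivity) h1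
  rw [gam, if_neg htpos.ne']
  rcases eq_or_lt_of_le h1 with he | hlt
  · -- t = 1/(n+1)
    have hcast : ((n+1:ℕ):ℝ) = (n:ℝ)+1 := by push_cast; ring
    have hfl : ⌊1/(t:ℝ)⌋₊ = n+1 := by
      rw [← he, one_div_one_div, ← hcast, Nat.floor_natCast]
    have h1' : sc (n+1) (t:ℝ) = 1 := by
      rw [← he, ← hcast]
      exact sc_right (by omega)
    have h0' : sc n (t:ℝ) = 0 := by
      rw [← he]; exact sc_left n
    rw [hfl, h1', h0']
    exact glue' F hglue n hn
  · rw [floor_eq hn hlt h2]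

include hglue hF0 in
lemma gam_cont : Continuous (gam x₀ F) := by
  rw [continuous_iff_continuousAt]
  intro t₀
  rcases eq_or_lt_of_le t₀.2.1 with h0 | h0
  · -- t₀ = 0
    have ht0 : (t₀:ℝ) = 0 := h0.symm
    have hγ0 : gam x₀ F t₀ = x₀ := by rw [gam, if_pos ht0]
    rw [ContinuousAt, hγ0, tendsto_nhds]
    intro U hU hxU
    have hsub : ({(⟨0, Or.inl rfl⟩ : Bset)} : Set Bset) ×ˢ (Set.univ : Set unitInterval)
        ⊆ F ⁻¹' U := by
      rintro ⟨p, s⟩ ⟨hp, -⟩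
      simp only [Set.mem_singleton_iff] at hp
      subst hp
      simp only [Set.mem_preimage]
      rw [hF0 s]
      exact hxU
    obtain ⟨u, v, hou, hov, hbu, hvv, huv⟩ :=
      generalized_tube_lemma isCompact_singleton isCompact_univ (hU.preimage F.continuous) hsub
    have htend : Filter.Tendsto (fun n : ℕ => b n) Filter.atTop
        (𝓝 (⟨0, Or.inl rfl⟩ : Bset)) := by
      rw [tendsto_subtype_rng]
      exact tendsto_one_div_atTop_nhds_zero_nat
    have hev : ∀ᶠ n in Filter.atTop, b n ∈ u := htend.eventually (hou.mem_nhds (hbu rfl))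
    obtain ⟨n₀, hn₀⟩ := Filter.eventually_atTop.1 hev
    set N := max n₀ 1 with hN
    have hNpos : (0:ℝ) < (N:ℝ) := by
      have h1 : 1 ≤ N := le_max_right _ _
      have : 0 < N := h1
      exact_mod_cast this
    have hopen : IsOpen {t : unitInterval | (t:ℝ) < 1/(N:ℝ)} :=
      isOpen_Iio.preimage continuous_subtype_val
    have hmem : t₀ ∈ {t : unitInterval | (t:ℝ) < 1/(N:ℝ)} := by
      show (t₀:ℝ) < 1/(N:ℝ)
      rw [ht0]
      positivity
    refine Filter.mem_of_superset (hopen.mem_nhds hmem) ?_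
    intro t ht
    simp only [Set.mem_setOf_eq] at ht
    simp only [Set.mem_preimage]
    by_cases hz : (t:ℝ) = 0
    · rw [gam, if_pos hz]; exact hxU
    · have htpos : 0 < (t:ℝ) := lt_of_le_of_ne t.2.1 (Ne.symm hz)
      have hNle : (N:ℝ) ≤ 1/(t:ℝ) := by
        rw [le_div_iff₀ htpos]
        rw [lt_div_iff₀ hNpos] at ht
        nlinarith
      have hm : n₀ ≤ ⌊1/(t:ℝ)⌋₊ := le_trans (le_max_left _ _) (Nat.le_floor hNle)
      rw [gam, if_neg hz]
      exact huv ⟨hn₀ _ hm, hvv (Set.mem_univ _)⟩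
  · -- 0 < t₀
    obtain ⟨hn1, hlt, hle⟩ := floor_bounds h0 t₀.2.2
    set n := ⌊1/(t₀:ℝ)⌋₊ with hn
    have hn' : (0:ℝ) < n := by exact_mod_cast hn1
    rcases lt_or_eq_of_le hle with hlt2 | heq
    · -- interior: t₀ < 1/n
      apply ((g_cont F n).continuousAt).congr
      have hmem : {t : unitInterval | 1/((n:ℝ)+1) < (t:ℝ) ∧ (t:ℝ) < 1/(n:ℝ)} ∈ 𝓝 t₀ := by
        refine IsOpen.mem_nhds ?_ ⟨hlt, hlt2⟩
        exact isOpen_Ioo.preimage continuous_subtype_val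
      filter_upwards [hmem] with t ht
      exact (gam_spec x₀ F hglue n hn1 t ht.1.le ht.2.le).symm
    · rcases Nat.exists_eq_add_of_le hn1 with ⟨m, hm⟩
      rcases Nat.eq_zero_or_pos m with hm0 | hm1
      · -- n = 1, t₀ = 1
        apply ((g_cont F 1).continuousAt).congr
        have hn1' : n = 1 := by omega
        have hmem : {t : unitInterval | 1/2 < (t:ℝ)} ∈ 𝓝 t₀ := by
          refine IsOpen.mem_nhds (isOpen_Ioi.preimage continuous_subtype_val) ?_
          show (1:ℝ)/2 < (t₀:ℝ)
          rw [heq, hn1']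
          norm_num
        filter_upwards [hmem] with t ht
        refine (gam_spec x₀ F hglue 1 le_rfl t ?_ ?_).symm
        · push_cast
          linarith [ht]
        · push_cast
          simpa using t.2.2
      · -- m ≥ 1; glue at t₀ = 1/n with n = m+1
        have hnm : n = m + 1 := by omega
        have hmpos : (0:ℝ) < m := by exact_mod_cast hm1
        have hcont2 : Continuous fun t : unitInterval =>
            if (t:ℝ) ≤ 1/(n:ℝ) then F (b n, sc n (t:ℝ)) else F (b m, sc m (t:ℝ)) := by
          refine Continuous.if_le (g_cont F n) (g_cont F m) continuous_subtype_val
            continuous_const ?_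
          intro t htn
          have e1 : sc n (t:ℝ) = 1 := by rw [htn]; exact sc_right hn1
          have e2 : sc m (t:ℝ) = 0 := by
            rw [htn, hnm, show (((m+1:ℕ)):ℝ) = (m:ℝ)+1 by push_cast; ring]
            exact sc_left m
          rw [e1, e2, hnm]
          exact glue' F hglue m hm1
        apply hcont2.continuousAt.congr
        have hmem : {t : unitInterval | 1/((n:ℝ)+1) < (t:ℝ) ∧ (t:ℝ) < 1/(m:ℝ)} ∈ 𝓝 t₀ := by
          refine IsOpen.mem_nhds (isOpen_Ioo.preimage continuous_subtype_val) ?_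
          refine ⟨?_, ?_⟩
          · rw [heq]
            exact one_div_lt_one_div_of_lt hn' (by linarith)
          · rw [heq]
            apply one_div_lt_one_div_of_lt hmpos
            rw [hnm]; push_cast; linarith
        filter_upwards [hmem] with t ht
        by_cases hc : (t:ℝ) ≤ 1/(n:ℝ)
        · rw [if_pos hc]
          exact (gam_spec x₀ F hglue n hn1 t ht.1.le hc).symm
        · rw [if_neg hc]
          push_neg at hc
          refine (gam_spec x₀ F hglue m hm1 t ?_ ht.2.le).symm
          rw [show (m:ℝ)+1 = (n:ℝ) by rw [hnm]; push_cast; ring]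
          exact hc.le

lemma gam_zero : gam x₀ F 0 = x₀ := by
  rw [gam]
  simp

lemma gam_one : gam x₀ F 1 = F (⟨1, Or.inr ⟨1, le_refl 1, by rw [Nat.cast_one, div_one]⟩⟩, 1) := by
  have hc1 : ((1:unitInterval):ℝ) = 1 := rfl
  rw [gam, if_neg (by rw [hc1]; norm_num), hc1]
  have hfl : ⌊(1:ℝ)/1⌋₊ = 1 := by norm_num
  rw [hfl]
  have hsc : sc 1 (1:ℝ) = 1 := by
    have := sc_right (n := 1) le_rfl
    norm_num at this
    exact this
  rw [hsc]
  refine congrArg (fun p : Bset => F (p, 1)) (Subtype.ext ?_)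
  show 1/((1:ℕ):ℝ) = 1
  norm_num

end Stmt15Aux

/-- Gluing the paths `t ↦ F (1/n, t)` of a homotopy `F : B × I → X` with `F (0, ·) ≡ x₀` and
matching endpoints yields a continuous path `γ` from `x₀` to `F (1, 1)` with
`γ t = F (1/n, (1/n − 1/(n+1))⁻¹ (t − 1/(n+1)))` for `t ∈ [1/(n+1), 1/n]`. -/
theorem stmt15 (X : Type) [TopologicalSpace X] (x₀ : X) (F : C(Bset × unitInterval, X))
    (hF0 : ∀ t : unitInterval, F (⟨0, Or.inl rfl⟩, t) = x₀)
    (hglue : ∀ (n : ℕ) (hn : 2 ≤ n),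
      F (⟨1 / n, Or.inr ⟨n, by omega, rfl⟩⟩, 1) =
        F (⟨1 / ((n : ℝ) - 1),
            Or.inr ⟨n - 1, by omega, by rw [Nat.cast_sub (by omega : 1 ≤ n), Nat.cast_one]⟩⟩,
          0)) :
    ∃ γ : C(unitInterval, X),
      γ 0 = x₀ ∧
      γ 1 = F (⟨1, Or.inr ⟨1, le_refl 1, by norm_num⟩⟩, 1) ∧
      ∀ (n : ℕ) (hn : 1 ≤ n) (t : unitInterval)
        (ht : 1 / ((n : ℝ) + 1) ≤ (t : ℝ) ∧ (t : ℝ) ≤ 1 / n),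
        γ t = F (⟨1 / n, Or.inr ⟨n, hn, rfl⟩⟩,
          ⟨(1 / (n : ℝ) - 1 / ((n : ℝ) + 1))⁻¹ * ((t : ℝ) - 1 / ((n : ℝ) + 1)), by
            have hn' : (0 : ℝ) < n := by exact_mod_cast hn
            have hd : (0 : ℝ) < 1 / (n : ℝ) - 1 / ((n : ℝ) + 1) := by
              rw [sub_pos]
              apply one_div_lt_one_div_of_lt hn'
              linarith
            constructor
            · exact mul_nonneg (inv_nonneg.mpr hd.le) (by linarith [ht.1])
            · calc (1 / (n : ℝ) - 1 / ((n : ℝ) + 1))⁻¹ * ((t : ℝ) - 1 / ((n : ℝ) + 1))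
                  ≤ (1 / (n : ℝ) - 1 / ((n : ℝ) + 1))⁻¹ * (1 / (n : ℝ) - 1 / ((n : ℝ) + 1)) :=
                    mul_le_mul_of_nonneg_left (by linarith [ht.2]) (inv_nonneg.mpr hd.le)
                _ = 1 := inv_mul_cancel₀ hd.ne'⟩) := by
  refine ⟨⟨Stmt15Aux.gam x₀ F, Stmt15Aux.gam_cont x₀ F hglue hF0⟩, ?_, ?_, ?_⟩
  · exact Stmt15Aux.gam_zero x₀ F
  · exact Stmt15Aux.gam_one x₀ F
  · intro n hn t ht
    show Stmt15Aux.gam x₀ F t = _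
    rw [Stmt15Aux.gam_spec x₀ F hglue n hn t ht.1 ht.2]
    refine congrArg F (Prod.ext (Subtype.ext rfl) (Subtype.ext ?_))
    exact Stmt15Aux.sc_coe hn ht.1 ht.2
end
end
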